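/- arXiv:1007.5017 — 12 statements merged into one kernel-verified Lean document; each statement's English description precedes it below -/
import Mathlib

section
/- A sequence of positive reals a_0, ..., a_m that is ratio monotone is log-concave, i.e., if a_m/a_0 ≤ a_{m-1}/a_1 ≤ ... ≤ a_{m-i}/a_i ≤ ... ≤ 1 (for i up to ⌊(m-1)/2⌋) and a_0/a_{m-1} ≤ a_1/a_{m-2} ≤ ... ≤ a_{i-1}/a_{m-i} ≤ ... ≤ 1 (for i up to ⌊m/2⌋), then a_k² ≥ a_{k-1}·a_{k+1} for all 1 ≤ k ≤ m-1. -/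
def RatioMonotone (a : ℕ → ℝ) (m : ℕ) : Prop :=
  (∀ i : ℕ, i + 1 ≤ (m - 1) / 2 → a (m - i) / a i ≤ a (m - (i + 1)) / a (i + 1)) ∧
  a (m - (m - 1) / 2) / a ((m - 1) / 2) ≤ 1 ∧
  (∀ i : ℕ, 1 ≤ i → i + 1 ≤ m / 2 → a (i - 1) / a (m - i) ≤ a i / a (m - (i + 1))) ∧
  (1 ≤ m / 2 → a (m / 2 - 1) / a (m - m / 2) ≤ 1)

theorem stmt_3 (m : ℕ) (a : ℕ → ℝ)
    (hpos : ∀ k ≤ m, 0 < a k)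
    (hrm : RatioMonotone a m) :
    ∀ k : ℕ, 1 ≤ k → k + 1 ≤ m → a (k - 1) * a (k + 1) ≤ a k ^ 2 := by
  obtain ⟨h1, h2, h3, h4⟩ := hrm
  have c1 : ∀ i, i + 1 ≤ (m - 1) / 2 → a (m - i) * a (i + 1) ≤ a (m - (i + 1)) * a i := by
    intro i hi
    have := h1 i hi
    rw [div_le_div_iff₀ (hpos i (by omega)) (hpos (i + 1) (by omega))] at this
    exact this
  have c2 : ∀ i, 1 ≤ i → i + 1 ≤ m / 2 →
      a (i - 1) * a (m - (i + 1)) ≤ a i * a (m - i) := by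
    intro i hi hi2
    have := h3 i hi hi2
    rw [div_le_div_iff₀ (hpos (m - i) (by omega)) (hpos (m - (i + 1)) (by omega))] at this
    exact this
  have e1 : a (m - (m - 1) / 2) ≤ a ((m - 1) / 2) := by
    have := (div_le_one (hpos ((m - 1) / 2) (by omega))).mp h2
    exact this
  have e2 : 1 ≤ m / 2 → a (m / 2 - 1) ≤ a (m - m / 2) := by
    intro h
    exact (div_le_one (hpos (m - m / 2) (by omega))).mp (h4 h)
  intro k hk1 hk2
  have hm2 : 2 ≤ m := by omega
  by_cases hA : k + 1 ≤ (m - 1) / 2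
  · -- lower half
    have hB1 := c1 k hA
    have hB2 := c2 k hk1 (by omega)
    have hp1 := hpos (m - k) (by omega)
    have hp2 := hpos (m - (k + 1)) (by omega)
    have key : a (k - 1) * a (k + 1) * (a (m - k) * a (m - (k + 1))) ≤
        a k ^ 2 * (a (m - k) * a (m - (k + 1))) := by
      nlinarith [mul_le_mul hB2 hB1
        (mul_nonneg hp1.le (hpos (k + 1) (by omega)).le)
        (mul_nonneg (hpos k (by omega)).le hp1.le)]
    exact le_of_mul_le_mul_right key (mul_pos hp1 hp2)
  · by_cases hB : m - k ≤ (m - 1) / 2 ∧ m - k + 1 ≤ m / 2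
    · -- upper half
      obtain ⟨hb1, hb2⟩ := hB
      have hB1 := c1 (m - k - 1) (by omega)
      rw [show m - (m - k - 1) = k + 1 from by omega,
          show m - k - 1 + 1 = m - k from by omega,
          show m - (m - k) = k from by omega] at hB1
      -- hB1 : a (k+1) * a (m-k) ≤ a k * a (m-k-1)
      have hB2 := c2 (m - k) (by omega) (by omega)
      rw [show m - k - 1 = m - k - 1 from rfl,
          show m - (m - k + 1) = k - 1 from by omega,
          show m - (m - k) = k from by omega] at hB2
      -- hB2 : a (m-k-1) * a (k-1) ≤ a (m-k) * a k
      have hp1 := hpos (m - k) (by omega)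
      have hp2 := hpos (m - k - 1) (by omega)
      have key : a (k - 1) * a (k + 1) * (a (m - k) * a (m - k - 1)) ≤
          a k ^ 2 * (a (m - k) * a (m - k - 1)) := by
        nlinarith [mul_le_mul hB1 hB2
          (mul_nonneg hp2.le (hpos (k - 1) (by omega)).le)
          (mul_nonneg (hpos k (by omega)).le hp2.le)]
      exact le_of_mul_le_mul_right key (mul_pos hp1 hp2)
    · -- middle cases
      rcases Nat.even_or_odd m with ⟨t, ht⟩ | ⟨t, ht⟩
      · -- m = 2t
        have hmt : m = 2 * t := by omega
        have hkt : k = t - 1 ∨ k = t := by omega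
        rw [show m - (m - 1) / 2 = t + 1 from by omega,
            show (m - 1) / 2 = t - 1 from by omega] at e1
        have e2' := e2 (by omega)
        rw [show m / 2 - 1 = t - 1 from by omega,
            show m - m / 2 = t from by omega] at e2'
        rcases hkt with hkt | hkt
        · -- k = t - 1, t ≥ 2
          have ht2 : 2 ≤ t := by omega
          have hB2 := c2 k hk1 (by omega)
          rw [show m - (k + 1) = t from by omega, show m - k = t + 1 from by omega,
              hkt] at hB2
          -- hB2 : a (t-1-1) * a t ≤ a (t-1) * a (t+1)
          rw [hkt, show t - 1 + 1 = t from by omega]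
          have hp := hpos (t - 1) (by omega)
          have hpt := hpos t (by omega)
          nlinarith [mul_le_mul_of_nonneg_left e1 (le_of_lt hp)]
        · -- k = t
          rw [hkt]
          have hp1 := hpos (t - 1) (by omega)
          have hp2 := hpos (t + 1) (by omega)
          have hpt := hpos t (by omega)
          nlinarith
      · -- m = 2t + 1
        have hmt : m = 2 * t + 1 := by omega
        have ht1 : 1 ≤ t := by omega
        have hkt : k = t ∨ k = t + 1 := by omega
        rw [show m - (m - 1) / 2 = t + 1 from by omega,
            show (m - 1) / 2 = t from by omega] at e1
        have e2' := e2 (by omega)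
        rw [show m / 2 - 1 = t - 1 from by omega,
            show m - m / 2 = t + 1 from by omega] at e2'
        rcases hkt with hkt | hkt
        · -- k = t : a(t-1) ≤ a(t+1) ≤ a(t)
          rw [hkt]
          have hp1 := hpos (t - 1) (by omega)
          have hp2 := hpos (t + 1) (by omega)
          have hpt := hpos t (by omega)
          nlinarith
        · -- k = t + 1
          have hB1 := c1 (t - 1) (by omega)
          rw [show m - (t - 1) = t + 2 from by omega,
              show t - 1 + 1 = t from by omega,
              show m - t = t + 1 from by omega] at hB1
          -- hB1 : a (t+2) * a t ≤ a (t+1) * a (t-1)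
          rw [hkt, show t + 1 - 1 = t from by omega]
          have hp1 := hpos (t - 1) (by omega)
          have hp2 := hpos (t + 1) (by omega)
          nlinarith [mul_le_mul_of_nonneg_left e2' (le_of_lt hp2)]
end

section
/- A sequence of positive reals a_0, ..., a_m that is ratio monotone is spiral, i.e., a_m ≤ a_0 ≤ a_{m-1} ≤ a_1 ≤ a_{m-2} ≤ ... ≤ a_{⌊m/2⌋}. -/
theorem stmt_4 (m : ℕ) (a : ℕ → ℝ)
    (hpos : ∀ k ≤ m, 0 < a k)
    (hrm : RatioMonotone a m) :
    (∀ i : ℕ, 2 * i < m → a (m - i) ≤ a i) ∧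
    (∀ i : ℕ, 2 * i + 1 < m → a i ≤ a (m - i - 1)) := by
  obtain ⟨h1, h2, h3, h4⟩ := hrm
  constructor
  · intro i hi
    have hi' : i ≤ (m - 1) / 2 := by omega
    have key : ∀ j, i ≤ j → j ≤ (m - 1) / 2 → a (m - i) / a i ≤ a (m - j) / a j := by
      intro j
      induction j with
      | zero =>
        intro h1' _
        obtain rfl : i = 0 := by omega
        exact le_rfl
      | succ n ih =>
        intro hij hj
        rcases Nat.lt_or_ge i (n + 1) with h | h
        · calc a (m - i) / a i ≤ a (m - n) / a n := ih (by omega) (by omega)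
            _ ≤ _ := h1 n (by omega)
        · obtain rfl : i = n + 1 := by omega
          exact le_rfl
    have hle := (key ((m - 1) / 2) hi' le_rfl).trans h2
    exact (div_le_one (hpos i (by omega))).mp hle
  · intro i hi
    have key : ∀ j, i + 1 ≤ j → j ≤ m / 2 →
        a i / a (m - (i + 1)) ≤ a (j - 1) / a (m - j) := by
      intro j
      induction j with
      | zero => intro h _; omega
      | succ n ih =>
        intro hij hj
        rcases Nat.lt_or_ge (i + 1) (n + 1) with h | h
        · calc a i / a (m - (i + 1)) ≤ a (n - 1) / a (m - n) := ih (by omega) (by omega)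
            _ ≤ a n / a (m - (n + 1)) := h3 n (by omega) (by omega)
            _ = a (n + 1 - 1) / a (m - (n + 1)) := by norm_num
        · have hin : i = n := by omega
          subst hin; simp
    have hm2 : 1 ≤ m / 2 := by omega
    have hle := (key (m / 2) (by omega) le_rfl).trans (h4 hm2)
    have heq : m - i - 1 = m - (i + 1) := by omega
    rw [heq]
    exact (div_le_one (hpos (m - (i + 1)) (by omega))).mp hle
end

section
/- A sequence of positive reals that is ratio monotone is unimodal: there exists r such that a_0 ≤ a_1 ≤ ... ≤ a_r and a_r ≥ a_{r+1} ≥ ... ≥ a_m. -/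
theorem stmt_5 (m : ℕ) (a : ℕ → ℝ)
    (hpos : ∀ k ≤ m, 0 < a k)
    (hrm : RatioMonotone a m) :
    ∃ r ≤ m, (∀ i : ℕ, i < r → a i ≤ a (i + 1)) ∧
      (∀ i : ℕ, r ≤ i → i < m → a (i + 1) ≤ a i) := by
  obtain ⟨h1, h2, h3, h4⟩ := hrm
  -- B : for i ≤ (m-1)/2, a (m-i) ≤ a i
  have keyB : ∀ j, j ≤ (m-1)/2 → a (m - ((m-1)/2 - j)) / a ((m-1)/2 - j) ≤ 1 := by
    intro j
    induction j with
    | zero => intro _; simpa using h2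
    | succ j ih =>
      intro hj
      have e : (m-1)/2 - (j+1) + 1 = (m-1)/2 - j := by omega
      have h := h1 ((m-1)/2 - (j+1)) (by omega)
      rw [e] at h
      exact h.trans (ih (by omega))
  have hB : ∀ i, i ≤ (m-1)/2 → a (m - i) ≤ a i := by
    intro i hi
    have h := keyB ((m-1)/2 - i) (by omega)
    rw [show (m-1)/2 - ((m-1)/2 - i) = i by omega] at h
    exact (div_le_one (hpos i (by omega))).mp h
  -- A : for 1 ≤ i ≤ m/2, a (i-1) ≤ a (m-i)
  have keyA : ∀ j, ∀ i, 1 ≤ i → i + j = m / 2 → a (i - 1) / a (m - i) ≤ 1 := by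
    intro j
    induction j with
    | zero =>
      intro i hi1 hi2
      have : i = m / 2 := by omega
      subst this
      exact h4 hi1
    | succ j ih =>
      intro i hi1 hi2
      have h := h3 i hi1 (by omega)
      have h' := ih (i + 1) (by omega) (by omega)
      rw [show i + 1 - 1 = i by omega] at h'
      exact h.trans h'
  have hA : ∀ i, 1 ≤ i → i ≤ m / 2 → a (i - 1) ≤ a (m - i) := by
    intro i hi1 hi2
    exact (div_le_one (hpos (m - i) (by omega))).mp
      (keyA (m / 2 - i) i hi1 (by omega))
  refine ⟨m / 2, by omega, ?_, ?_⟩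
  · intro i hi
    have step1 : a i ≤ a (m - (i + 1)) := by
      have h := hA (i + 1) (by omega) (by omega)
      rwa [show i + 1 - 1 = i by omega] at h
    have step2 : a (m - (i + 1)) ≤ a (i + 1) := by
      rcases le_or_gt (i + 1) ((m - 1) / 2) with h | h
      · exact hB (i + 1) h
      · rw [show m - (i + 1) = i + 1 by omega]
    exact step1.trans step2
  · intro i hi hm
    set j := m - 1 - i with hjdef
    have e1 : i + 1 = m - j := by omega
    have e2 : i = m - (j + 1) := by omega
    have step1 : a (m - j) ≤ a j := hB j (by omega)
    have step2 : a j ≤ a (m - (j + 1)) := by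
      rcases le_or_gt (j + 1) (m / 2) with h | h
      · have h' := hA (j + 1) (by omega) h
        rwa [show j + 1 - 1 = j by omega] at h'
      · rw [show m - (j + 1) = j by omega]
    rw [e1, e2]
    exact step1.trans step2
end

section
/- If B(x) = ∑_{k=0}^m a_k x^k is a polynomial with positive coefficients whose coefficient sequence is ratio monotone, then the coefficient sequence b_k = a_{k-1} + a_k (with a_{-1} = a_{m+1} = 0) of (x+1)B(x) is also ratio monotone. -/
private lemma aux_chain {A B C p q r : ℝ} (hB : 0 < B) (hq : 0 < q) (hp : 0 ≤ p) (hr : 0 ≤ r)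
    (h1 : A * q ≤ B * p) (h2 : B * r ≤ C * q) : A * r ≤ C * p := by
  have h3 : (A * q) * (B * r) ≤ (B * p) * (C * q) :=
    mul_le_mul h1 h2 (mul_nonneg hB.le hr) (mul_nonneg hB.le hp)
  nlinarith [mul_pos hB hq]

theorem stmt_6 (m : ℕ) (a b : ℕ → ℝ)
    (hpos : ∀ k ≤ m, 0 < a k)
    (hrm : RatioMonotone a m)
    (hb : ∀ k ≤ m + 1,
      b k = (if k = 0 then 0 else a (k - 1)) + (if k ≤ m then a k else 0)) :
    RatioMonotone b (m + 1) := by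
  obtain ⟨h1, h2, h3, h4⟩ := hrm
  have hbmid : ∀ k, 1 ≤ k → k ≤ m → b k = a (k - 1) + a k := by
    intro k hk1 hk2
    rw [hb k (by omega), if_neg (by omega), if_pos hk2]
  have hb0 : b 0 = a 0 := by
    rw [hb 0 (by omega), if_pos rfl, if_pos (by omega)]; ring
  have hbtop : b (m + 1) = a m := by
    rw [hb (m + 1) le_rfl, if_neg (by omega), if_neg (by omega)]
    norm_num
  -- product forms of the hypotheses
  have P1 : ∀ i, i + 1 ≤ (m - 1) / 2 →
      a (m - i) * a (i + 1) ≤ a (m - (i + 1)) * a i := by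
    intro i hi
    have := h1 i hi
    rwa [div_le_div_iff₀ (hpos i (by omega)) (hpos (i + 1) (by omega))] at this
  have P2 : a (m - (m - 1) / 2) ≤ a ((m - 1) / 2) := by
    have := h2
    rwa [div_le_one (hpos ((m - 1) / 2) (by omega))] at this
  have P3 : ∀ i, 1 ≤ i → i + 1 ≤ m / 2 →
      a (i - 1) * a (m - (i + 1)) ≤ a i * a (m - i) := by
    intro i hi1 hi
    have := h3 i hi1 hi
    rwa [div_le_div_iff₀ (hpos (m - i) (by omega)) (hpos (m - (i + 1)) (by omega))] at this
  have P4 : 1 ≤ m / 2 → a (m / 2 - 1) ≤ a (m - m / 2) := by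
    intro hm
    have := h4 hm
    rwa [div_le_one (hpos (m - m / 2) (by omega))] at this
  -- extended first chain
  have E1 : ∀ j, j + 1 ≤ m / 2 → a (m - j) * a (j + 1) ≤ a (m - (j + 1)) * a j := by
    intro j hj
    by_cases hc : j + 1 ≤ (m - 1) / 2
    · exact P1 j hc
    · have hm : m = 2 * (j + 1) := by omega
      rw [show m - j = j + 2 from by omega, show m - (j + 1) = j + 1 from by omega]
      have hP : a (j + 2) ≤ a j := by
        have := P2
        rwa [show m - (m - 1) / 2 = j + 2 from by omega,
          show (m - 1) / 2 = j from by omega] at this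
      nlinarith [hpos (j + 1) (by omega)]
  -- extended second chain
  have E3 : ∀ j, 1 ≤ j → j ≤ (m - 1) / 2 →
      a (j - 1) * a (m - (j + 1)) ≤ a j * a (m - j) := by
    intro j hj1 hj
    by_cases hc : j + 1 ≤ m / 2
    · exact P3 j hj1 hc
    · have hm : m = 2 * j + 1 := by omega
      rw [show m - (j + 1) = j from by omega, show m - j = j + 1 from by omega]
      have hP : a (j - 1) ≤ a (j + 1) := by
        have := P4 (by omega)
        rwa [show m / 2 - 1 = j - 1 from by omega,
          show m - m / 2 = j + 1 from by omega] at this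
      nlinarith [hpos j (by omega), hpos (j - 1) (by omega)]
  refine ⟨?_, ?_, ?_, ?_⟩
  · -- first chain for b
    intro i hi
    have hi' : i + 1 ≤ m / 2 := by omega
    rcases Nat.eq_zero_or_pos i with rfl | hip
    · -- i = 0
      rw [show m + 1 - 0 = m + 1 from by omega, show m + 1 - (0 + 1) = m from by omega,
        hb0, hbtop, hbmid m (by omega) (by omega),
        hbmid (0 + 1) (by omega) (by omega),
        show (0 : ℕ) + 1 - 1 = 0 from by omega]
      rw [div_le_div_iff₀ (hpos 0 (by omega))
        (add_pos (hpos 0 (by omega)) (hpos 1 (by omega)))]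
      have f := E1 0 hi'
      rw [Nat.sub_zero] at f
      nlinarith [mul_pos (hpos m (by omega)) (hpos 0 (by omega))]
    · obtain ⟨j, rfl⟩ : ∃ j, i = j + 1 := ⟨i - 1, by omega⟩
      rw [show m + 1 - (j + 1) = m - j from by omega,
        show m + 1 - (j + 1 + 1) = m - (j + 1) from by omega,
        show j + 1 + 1 = j + 2 from by omega,
        hbmid (m - j) (by omega) (by omega), show m - j - 1 = m - (j + 1) from by omega,
        hbmid (m - (j + 1)) (by omega) (by omega),
        show m - (j + 1) - 1 = m - (j + 2) from by omega,
        hbmid (j + 1) (by omega) (by omega), show j + 1 - 1 = j from by omega,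
        hbmid (j + 2) (by omega) (by omega), show j + 2 - 1 = j + 1 from by omega]
      rw [div_le_div_iff₀ (add_pos (hpos j (by omega)) (hpos (j + 1) (by omega)))
        (add_pos (hpos (j + 1) (by omega)) (hpos (j + 2) (by omega)))]
      have f1 := E1 j (by omega)
      have f2 := E1 (j + 1) (by omega)
      rw [show j + 1 + 1 = j + 2 from by omega] at f2
      have f3 : a (m - j) * a (j + 2) ≤ a (m - (j + 2)) * a j :=
        aux_chain (hpos (m - (j + 1)) (by omega)) (hpos (j + 1) (by omega))
          (hpos j (by omega)).le (hpos (j + 2) (by omega)).le f1 f2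
      nlinarith [f1, f2, f3]
  · -- middle condition, first chain
    rcases Nat.lt_or_ge m 2 with hm | hm
    · interval_cases m
      · rw [show 0 + 1 - (0 + 1 - 1) / 2 = 1 from by norm_num,
          show (0 + 1 - 1) / 2 = 0 from by norm_num, hb0,
          hb 1 (by omega), if_neg (by omega), if_neg (by omega)]
        norm_num
        exact le_of_eq (div_self (hpos 0 (by omega)).ne')
      · rw [show 1 + 1 - (1 + 1 - 1) / 2 = 2 from by norm_num,
          show (1 + 1 - 1) / 2 = 0 from by norm_num, hb0,
          hb 2 (by omega), if_neg (by omega), if_neg (by omega)]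
        norm_num
        have := h2
        norm_num at this
        exact this
    · rw [show (m + 1 - 1) / 2 = m / 2 from by omega]
      rw [hbmid (m / 2) (by omega) (by omega),
        hbmid (m + 1 - m / 2) (by omega) (by omega),
        show m + 1 - m / 2 - 1 = m - m / 2 from by omega]
      rw [div_le_one (add_pos (hpos (m / 2 - 1) (by omega)) (hpos (m / 2) (by omega)))]
      by_cases hpar : m % 2 = 0
      · have hP : a (m - m / 2 + 1) ≤ a (m / 2 - 1) := by
          have := P2
          rwa [show m - (m - 1) / 2 = m - m / 2 + 1 from by omega,
            show (m - 1) / 2 = m / 2 - 1 from by omega] at this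
        rw [show m + 1 - m / 2 = m - m / 2 + 1 from by omega,
          show m - m / 2 = m / 2 from by omega] at *
        linarith
      · -- m odd, m = 2q+1, m - m/2 = m/2+1
        have hP : a (m / 2 + 1) ≤ a (m / 2) := by
          have := P2
          rwa [show m - (m - 1) / 2 = m / 2 + 1 from by omega,
            show (m - 1) / 2 = m / 2 from by omega] at this
        have f := P1 (m / 2 - 1) (by omega)
        rw [show m - (m / 2 - 1) = m / 2 + 2 from by omega,
          show m / 2 - 1 + 1 = m / 2 from by omega,
          show m - (m / 2) = m / 2 + 1 from by omega] at f
        -- f : a (m/2+2) * a (m/2) ≤ a (m/2+1) * a (m/2-1)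
        have g : a (m / 2 + 2) ≤ a (m / 2 - 1) := by
          nlinarith [hpos (m / 2) (by omega), hpos (m / 2 - 1) (by omega)]
        rw [show m + 1 - m / 2 = m / 2 + 2 from by omega,
          show m - m / 2 = m / 2 + 1 from by omega]
        linarith
  · -- second chain for b
    intro i hi1 hi
    rcases Nat.lt_or_ge i 2 with hi2 | hi2
    · -- i = 1
      have : i = 1 := by omega
      subst this
      have hm3 : 3 ≤ m := by omega
      rw [show (1 : ℕ) - 1 = 0 from by omega, show m + 1 - 1 = m from by omega,
        show m + 1 - (1 + 1) = m - 1 from by omega, hb0,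
        hbmid m (by omega) (by omega),
        hbmid (m - 1) (by omega) (by omega), show m - 1 - 1 = m - 2 from by omega,
        hbmid 1 (by omega) (by omega), show (1 : ℕ) - 1 = 0 from by omega]
      rw [div_le_div_iff₀ (add_pos (hpos (m - 1) (by omega)) (hpos m (by omega)))
        (add_pos (hpos (m - 2) (by omega)) (hpos (m - 1) (by omega)))]
      have f := E3 1 (by omega) (by omega)
      rw [show (1 : ℕ) - 1 = 0 from by omega, show m - (1 + 1) = m - 2 from by omega,
        show m - 1 = m - 1 from rfl] at f
      nlinarith [mul_pos (hpos 0 (by omega)) (hpos m (by omega)),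
        mul_pos (hpos 1 (by omega)) (hpos m (by omega))]
    · obtain ⟨j, rfl⟩ : ∃ j, i = j + 2 := ⟨i - 2, by omega⟩
      have hm5 : 2 * j + 5 ≤ m := by omega
      rw [show j + 2 - 1 = j + 1 from by omega,
        show m + 1 - (j + 2) = m - (j + 1) from by omega,
        show m + 1 - (j + 2 + 1) = m - (j + 2) from by omega,
        hbmid (j + 1) (by omega) (by omega), show j + 1 - 1 = j from by omega,
        hbmid (j + 2) (by omega) (by omega), show j + 2 - 1 = j + 1 from by omega,
        hbmid (m - (j + 1)) (by omega) (by omega),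
        show m - (j + 1) - 1 = m - (j + 2) from by omega,
        hbmid (m - (j + 2)) (by omega) (by omega),
        show m - (j + 2) - 1 = m - (j + 3) from by omega]
      rw [div_le_div_iff₀
        (add_pos (hpos (m - (j + 2)) (by omega)) (hpos (m - (j + 1)) (by omega)))
        (add_pos (hpos (m - (j + 3)) (by omega)) (hpos (m - (j + 2)) (by omega)))]
      have f1 := E3 (j + 1) (by omega) (by omega)
      rw [show j + 1 - 1 = j from by omega, show j + 1 + 1 = j + 2 from by omega] at f1
      have f2 := E3 (j + 2) (by omega) (by omega)
      rw [show j + 2 - 1 = j + 1 from by omega, show j + 2 + 1 = j + 3 from by omega] at f2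
      have f3 : a j * a (m - (j + 3)) ≤ a (j + 2) * a (m - (j + 1)) :=
        aux_chain (hpos (j + 1) (by omega)) (hpos (m - (j + 2)) (by omega))
          (hpos (m - (j + 1)) (by omega)).le (hpos (m - (j + 3)) (by omega)).le f1 f2
      nlinarith [f1, f2, f3]
  · -- middle condition, second chain
    intro hm
    have hm1 : 1 ≤ m := by omega
    rcases Nat.lt_or_ge m 3 with hm3 | hm3
    · interval_cases m
      · rw [show (1 + 1) / 2 - 1 = 0 from by norm_num,
          show 1 + 1 - (1 + 1) / 2 = 1 from by norm_num, hb0,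
          hbmid 1 (by omega) (by omega), show (1 : ℕ) - 1 = 0 from by omega]
        rw [div_le_one (add_pos (hpos 0 (by omega)) (hpos 1 (by omega)))]
        linarith [hpos 1 (by omega)]
      · rw [show (2 + 1) / 2 - 1 = 0 from by norm_num,
          show 2 + 1 - (2 + 1) / 2 = 2 from by norm_num, hb0,
          hbmid 2 (by omega) (by omega), show (2 : ℕ) - 1 = 1 from by omega]
        rw [div_le_one (add_pos (hpos 1 (by omega)) (hpos 2 (by omega)))]
        have := P4 (by norm_num)
        norm_num at this
        linarith [hpos 2 (by omega)]
    · by_cases hpar : m % 2 = 0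
      · -- m even, m = 2q, q ≥ 2
        have hq2 : 2 ≤ m / 2 := by omega
        rw [show (m + 1) / 2 - 1 = m / 2 - 1 from by omega,
          show m + 1 - (m + 1) / 2 = m / 2 + 1 from by omega,
          hbmid (m / 2 - 1) (by omega) (by omega),
          show m / 2 - 1 - 1 = m / 2 - 2 from by omega,
          hbmid (m / 2 + 1) (by omega) (by omega),
          show m / 2 + 1 - 1 = m / 2 from by omega]
        rw [div_le_one (add_pos (hpos (m / 2) (by omega)) (hpos (m / 2 + 1) (by omega)))]
        have hP : a (m / 2 - 1) ≤ a (m / 2) := by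
          have := P4 (by omega)
          rwa [show m - m / 2 = m / 2 from by omega] at this
        have f := P3 (m / 2 - 1) (by omega) (by omega)
        rw [show m / 2 - 1 - 1 = m / 2 - 2 from by omega,
          show m / 2 - 1 + 1 = m / 2 from by omega,
          show m - m / 2 = m / 2 from by omega,
          show m - (m / 2 - 1) = m / 2 + 1 from by omega] at f
        -- f : a (m/2-2) * a (m/2) ≤ a (m/2-1) * a (m/2+1)
        have g : a (m / 2 - 2) ≤ a (m / 2 + 1) := by
          nlinarith [hpos (m / 2) (by omega), hpos (m / 2 + 1) (by omega)]
        linarith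
      · -- m odd, m = 2q+1, q ≥ 1
        rw [show (m + 1) / 2 - 1 = m / 2 from by omega,
          show m + 1 - (m + 1) / 2 = m / 2 + 1 from by omega,
          hbmid (m / 2) (by omega) (by omega),
          hbmid (m / 2 + 1) (by omega) (by omega),
          show m / 2 + 1 - 1 = m / 2 from by omega]
        rw [div_le_one (add_pos (hpos (m / 2) (by omega)) (hpos (m / 2 + 1) (by omega)))]
        have hP : a (m / 2 - 1) ≤ a (m / 2 + 1) := by
          have := P4 (by omega)
          rwa [show m - m / 2 = m / 2 + 1 from by omega] at this
        linarith
end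

section
/- If P(x) = ∑_{k=0}^m a_k x^k with 0 < a_0 ≤ a_1 ≤ ... ≤ a_m and m ≥ 2, then the coefficient sequence of P(x+1) is ratio monotone. -/
open Finset

/-- column sums of Pascal's triangle from row `r` to row `m`. -/
def cc (m k r : ℕ) : ℕ := ∑ j ∈ Icc r m, j.choose k

lemma hs_sum (k n : ℕ) : ∑ j ∈ range n, j.choose k = n.choose (k + 1) := by
  induction n with
  | zero => simp
  | succ n ih => rw [Finset.sum_range_succ, ih, Nat.choose_succ_succ']; exact Nat.add_comm _ _

lemma cc_eq (m k r : ℕ) (h : r ≤ m + 1) :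
    cc m k r + r.choose (k + 1) = (m + 1).choose (k + 1) := by
  have hset : Finset.Ico r (m + 1) = Finset.Icc r m := Finset.Ico_add_one_right_eq_Icc r m
  have h2 : (∑ j ∈ Finset.Ico 0 r, j.choose k) + ∑ j ∈ Finset.Ico r (m + 1), j.choose k
      = ∑ j ∈ Finset.Ico 0 (m + 1), j.choose k :=
    Finset.sum_Ico_consecutive (fun j => j.choose k) (Nat.zero_le r) h
  have h3 : ∑ j ∈ Finset.Ico 0 r, j.choose k = r.choose (k + 1) := by
    rw [← Finset.range_eq_Ico, hs_sum]
  have h4 : ∑ j ∈ Finset.Ico 0 (m + 1), j.choose k = (m + 1).choose (k + 1) := by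
    rw [← Finset.range_eq_Ico, hs_sum]
  rw [hset, h3, h4] at h2
  rw [cc]
  omega

lemma L1 (M j k : ℕ) (h : j ≤ M) :
    j.choose (k + 1) * M.choose k ≤ j.choose k * M.choose (k + 1) := by
  apply Nat.le_of_mul_le_mul_right _ (Nat.succ_pos k)
  calc j.choose (k+1) * M.choose k * (k+1)
      = (j.choose (k+1) * (k+1)) * M.choose k := by ring
    _ = (j.choose k * (j - k)) * M.choose k := by rw [Nat.choose_succ_right_eq]
    _ ≤ (j.choose k * (M - k)) * M.choose k := by
        have : j - k ≤ M - k := Nat.sub_le_sub_right h k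
        exact Nat.mul_le_mul_right _ (Nat.mul_le_mul_left _ this)
    _ = (M.choose k * (M - k)) * j.choose k := by ring
    _ = (M.choose (k+1) * (k+1)) * j.choose k := by rw [Nat.choose_succ_right_eq]
    _ = j.choose k * M.choose (k+1) * (k+1) := by ring

lemma star (m k r : ℕ) :
    cc m (k + 1) r * m.choose k ≤ cc m k r * m.choose (k + 1) := by
  rw [cc, cc, Finset.sum_mul, Finset.sum_mul]
  refine Finset.sum_le_sum fun j hj => L1 m j k ?_
  exact (Finset.mem_Icc.mp hj).2

lemma starstar (m k r : ℕ) (h : r ≤ m + 1) :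
    cc m k r * (m + 1).choose (k + 2) ≤ cc m (k + 1) r * (m + 1).choose (k + 1) := by
  have e1 := cc_eq m k r h
  have e2 := cc_eq m (k + 1) r h
  have h3 : r.choose (k + 2) * (m + 1).choose (k + 1)
      ≤ r.choose (k + 1) * (m + 1).choose (k + 2) := L1 (m + 1) r (k + 1) h
  apply Nat.le_of_add_le_add_right (b := r.choose (k + 1) * (m + 1).choose (k + 2))
  calc cc m k r * (m+1).choose (k+2) + r.choose (k+1) * (m+1).choose (k+2)
      = (cc m k r + r.choose (k+1)) * (m+1).choose (k+2) := by ring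
    _ = (m+1).choose (k+1) * (m+1).choose (k+2) := by rw [e1]
    _ = (cc m (k+1) r + r.choose (k+2)) * (m+1).choose (k+1) := by rw [e2]; ring
    _ = cc m (k+1) r * (m+1).choose (k+1) + r.choose (k+2) * (m+1).choose (k+1) := by ring
    _ ≤ cc m (k+1) r * (m+1).choose (k+1) + r.choose (k+1) * (m+1).choose (k+2) :=
        Nat.add_le_add_left h3 _

lemma chooseGL_aux (j : ℕ) : ∀ v s : ℕ, s ≤ v → 2 * v ≤ j → j.choose s ≤ j.choose v := by
  intro v
  induction v with
  | zero => intro s hs _; interval_cases s; rfl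
  | succ n ih =>
    intro s hs hv
    rcases Nat.lt_or_ge s (n + 1) with h | h
    · have h1 : j.choose s ≤ j.choose n := ih s (by omega) (by omega)
      have h2 : j.choose n ≤ j.choose (n + 1) :=
        Nat.choose_le_succ_of_lt_half_left (by omega)
      exact h1.trans h2
    · have : s = n + 1 := by omega
      rw [this]

lemma chooseGL (j s u : ℕ) (h1 : s ≤ u) (h2 : s + u ≤ j) : j.choose s ≤ j.choose u := by
  rcases Nat.le_total u (j - u) with h | h
  · exact chooseGL_aux j u s h1 (by omega)
  · have hsym : j.choose (j - u) = j.choose u := Nat.choose_symm (by omega)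
    rw [← hsym]
    exact chooseGL_aux j (j - u) s (by omega) (by omega)

lemma chooseM (j α β : ℕ) (h1 : β ≤ α) (h2 : j ≤ α + β) : j.choose α ≤ j.choose β := by
  rcases Nat.lt_or_ge j α with h | h
  · rw [Nat.choose_eq_zero_of_lt h]; exact Nat.zero_le _
  · have hsym : j.choose (j - α) = j.choose α := Nat.choose_symm h
    rw [← hsym]
    exact chooseGL j (j - α) β (by omega) (by omega)

open Finset in
theorem stmt_7 (m : ℕ) (hm : 2 ≤ m) (a b : ℕ → ℝ)
    (hpos : 0 < a 0)
    (hmono : ∀ k, k + 1 ≤ m → a k ≤ a (k + 1))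
    (hb : ∀ k ≤ m, b k = ∑ j ∈ Icc k m, (j.choose k : ℝ) * a j) :
    RatioMonotone b m := by
  set d : ℕ → ℝ := fun r => if r = 0 then a 0 else a r - a (r - 1) with hd
  have hd0 : 0 < d 0 := by simpa [hd]
  have hdnn : ∀ r ≤ m, 0 ≤ d r := by
    intro r hr
    rcases Nat.eq_zero_or_pos r with h | h
    · simp [hd, h]; positivity
    · have := hmono (r - 1) (by omega)
      have hr1 : r - 1 + 1 = r := by omega
      rw [hr1] at this
      simp only [hd]
      rw [if_neg (by omega)]
      linarith
  have ha_eq : ∀ j ≤ m, a j = ∑ r ∈ range (j + 1), d r := by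
    intro j hj
    induction j with
    | zero => simp [hd]
    | succ n ih =>
      rw [Finset.sum_range_succ, ← ih (by omega)]
      simp only [hd]
      rw [if_neg (by omega)]
      simp
  have hbrep : ∀ k ≤ m, b k = ∑ r ∈ range (m + 1), d r * (cc m k r : ℝ) := by
    intro k hk
    have step1 : b k = ∑ j ∈ range (m + 1), (j.choose k : ℝ) * a j := by
      rw [hb k hk, Finset.range_eq_Ico, ← Finset.Ico_add_one_right_eq_Icc]
      apply Finset.sum_subset
      · intro x hx; simp only [Finset.mem_Ico] at *; omega
      · intro x hx hx'
        simp only [Finset.mem_Ico] at hx hx'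
        have : x < k := by omega
        rw [Nat.choose_eq_zero_of_lt this]
        simp
    rw [step1]
    have : ∀ j ∈ range (m + 1), (j.choose k : ℝ) * a j
        = ∑ r ∈ Finset.Ico 0 (j + 1), (j.choose k : ℝ) * d r := by
      intro j hj
      rw [← Finset.mul_sum, ← Finset.range_eq_Ico,
        ← ha_eq j (by simpa using Nat.lt_succ_iff.mp (Finset.mem_range.mp hj))]
    rw [Finset.sum_congr rfl this, Finset.range_eq_Ico,
      ← Finset.sum_Ico_Ico_comm 0 (m + 1) (fun r j => (j.choose k : ℝ) * d r)]
    refine Finset.sum_congr rfl fun r hr => ?_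
    have hset : Finset.Ico r (m + 1) = Finset.Icc r m := Finset.Ico_add_one_right_eq_Icc r m
    rw [hset, cc, Nat.cast_sum, Finset.mul_sum]
    exact Finset.sum_congr rfl fun j hj => mul_comm _ _
  have ccpos : ∀ k ≤ m, ∀ r ≤ m, 0 < cc m k r := by
    intro k hk r hr
    have hmem : m ∈ Icc r m := by simp [hr]
    calc 0 < m.choose k := Nat.choose_pos hk
      _ ≤ cc m k r := Finset.single_le_sum (f := fun j => j.choose k)
          (fun i _ => Nat.zero_le _) hmem
  have hbpos : ∀ k ≤ m, 0 < b k := by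
    intro k hk
    rw [hbrep k hk]
    apply Finset.sum_pos'
    · intro r hr
      exact mul_nonneg (hdnn r (by simpa using Nat.lt_succ_iff.mp (Finset.mem_range.mp hr)))
        (by positivity)
    · refine ⟨0, by simp, ?_⟩
      have hc := ccpos k hk 0 (by omega)
      exact mul_pos hd0 (by exact_mod_cast hc)
  have cross : ∀ k1 k2 k3 k4 : ℕ, k1 ≤ m → k2 ≤ m → k3 ≤ m → k4 ≤ m →
      (∀ r q : ℕ, r ≤ m → q ≤ m → cc m k3 r * cc m k4 q ≤ cc m k1 r * cc m k2 q) →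
      b k3 * b k4 ≤ b k1 * b k2 := by
    intro k1 k2 k3 k4 h1 h2 h3 h4 hineq
    rw [hbrep k1 h1, hbrep k2 h2, hbrep k3 h3, hbrep k4 h4,
      Finset.sum_mul_sum, Finset.sum_mul_sum]
    refine Finset.sum_le_sum fun r hr => Finset.sum_le_sum fun q hq => ?_
    have hrm : r ≤ m := by simpa using Nat.lt_succ_iff.mp (Finset.mem_range.mp hr)
    have hqm : q ≤ m := by simpa using Nat.lt_succ_iff.mp (Finset.mem_range.mp hq)
    have key : ((cc m k3 r * cc m k4 q : ℕ) : ℝ) ≤ ((cc m k1 r * cc m k2 q : ℕ) : ℝ) := by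
      exact_mod_cast hineq r q hrm hqm
    push_cast at key
    have hdd : 0 ≤ d r * d q := mul_nonneg (hdnn r hrm) (hdnn q hqm)
    calc d r * (cc m k3 r : ℝ) * (d q * (cc m k4 q : ℝ))
        = d r * d q * ((cc m k3 r : ℝ) * (cc m k4 q : ℝ)) := by ring
      _ ≤ d r * d q * ((cc m k1 r : ℝ) * (cc m k2 q : ℝ)) :=
          mul_le_mul_of_nonneg_left key hdd
      _ = d r * (cc m k1 r : ℝ) * (d q * (cc m k2 q : ℝ)) := by ring
  have linear : ∀ k1 k2 : ℕ, k1 ≤ m → k2 ≤ m →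
      (∀ r ≤ m, cc m k2 r ≤ cc m k1 r) → b k2 ≤ b k1 := by
    intro k1 k2 h1 h2 hineq
    rw [hbrep k1 h1, hbrep k2 h2]
    refine Finset.sum_le_sum fun r hr => ?_
    have hrm : r ≤ m := by simpa using Nat.lt_succ_iff.mp (Finset.mem_range.mp hr)
    exact mul_le_mul_of_nonneg_left (by exact_mod_cast hineq r hrm) (hdnn r hrm)
  refine ⟨?_, ?_, ?_, ?_⟩
  · -- part 1
    intro i hi
    have hi1 : i + 1 ≤ m := by omega
    rw [div_le_div_iff₀ (hbpos i (by omega)) (hbpos (i + 1) (by omega))]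
    apply cross (m - (i + 1)) i (m - i) (i + 1) (by omega) (by omega) (by omega) (by omega)
    intro r q hr hq
    obtain ⟨j, hj1, hj2⟩ : ∃ j, m - (i + 1) = j ∧ m - i = j + 1 := ⟨m - (i + 1), rfl, by omega⟩
    rw [hj1, hj2]
    have Kpos : 0 < m.choose j * m.choose i :=
      Nat.mul_pos (Nat.choose_pos (by omega)) (Nat.choose_pos (by omega))
    apply Nat.le_of_mul_le_mul_right _ Kpos
    have c1 : m.choose (m - (i+1)) = m.choose (i+1) := Nat.choose_symm hi1
    have c2 : m.choose (m - i) = m.choose i := Nat.choose_symm (by omega)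
    calc cc m (j + 1) r * cc m (i + 1) q * (m.choose j * m.choose i)
        = (cc m (j + 1) r * m.choose j) * (cc m (i + 1) q * m.choose i) := by ring
      _ ≤ (cc m j r * m.choose (j + 1)) * (cc m i q * m.choose (i + 1)) :=
          Nat.mul_le_mul (star m j r) (star m i q)
      _ = cc m j r * cc m i q * (m.choose (j + 1) * m.choose (i + 1)) := by ring
      _ = cc m j r * cc m i q * (m.choose j * m.choose i) := by
          rw [show j + 1 = m - i from hj2.symm, c2, show j = m - (i+1) from hj1.symm, c1]
          ring
  · -- part 2
    set t := (m - 1) / 2 with ht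
    rw [div_le_one (hbpos t (by omega))]
    apply linear t (m - t) (by omega) (by omega)
    intro r hr
    rw [cc, cc]
    refine Finset.sum_le_sum fun j hj => ?_
    have hjm : j ≤ m := (Finset.mem_Icc.mp hj).2
    exact chooseM j (m - t) t (by omega) (by omega)
  · -- part 3
    intro i h1 h2
    rw [div_le_div_iff₀ (hbpos (m - i) (by omega)) (hbpos (m - (i + 1)) (by omega))]
    apply cross i (m - i) (i - 1) (m - (i + 1)) (by omega) (by omega) (by omega) (by omega)
    intro r q hr hq
    obtain ⟨i', hii⟩ : ∃ i', i = i' + 1 := ⟨i - 1, by omega⟩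
    obtain ⟨j, hj1, hj2⟩ : ∃ j, m - (i + 1) = j ∧ m - i = j + 1 := ⟨m - (i + 1), rfl, by omega⟩
    rw [hj1, hj2, show i - 1 = i' by omega, hii]
    have Kpos : 0 < (m+1).choose (i' + 2) * (m+1).choose (j + 2) :=
      Nat.mul_pos (Nat.choose_pos (by omega)) (Nat.choose_pos (by omega))
    apply Nat.le_of_mul_le_mul_right _ Kpos
    have c1 : (m+1).choose (j + 2) = (m+1).choose (i' + 1) := by
      rw [show j + 2 = (m + 1) - (i' + 1) by omega]
      exact Nat.choose_symm (by omega)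
    have c2 : (m+1).choose (j + 1) = (m+1).choose (i' + 2) := by
      rw [show j + 1 = (m + 1) - (i' + 2) by omega]
      exact Nat.choose_symm (by omega)
    calc cc m i' r * cc m j q * ((m+1).choose (i' + 2) * (m+1).choose (j + 2))
        = (cc m i' r * (m+1).choose (i' + 2)) * (cc m j q * (m+1).choose (j + 2)) := by ring
      _ ≤ (cc m (i' + 1) r * (m+1).choose (i' + 1)) * (cc m (j + 1) q * (m+1).choose (j + 1)) :=
          Nat.mul_le_mul (starstar m i' r (by omega)) (starstar m j q (by omega))
      _ = cc m (i' + 1) r * cc m (j + 1) q * ((m+1).choose (i' + 1) * (m+1).choose (j + 1)) := by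
          ring
      _ = cc m (i' + 1) r * cc m (j + 1) q * ((m+1).choose (i' + 2) * (m+1).choose (j + 2)) := by
          rw [c1, c2]; ring
  · -- part 4
    intro hs1
    set s := m / 2 with hsdef
    rw [div_le_one (hbpos (m - s) (by omega))]
    apply linear (m - s) (s - 1) (by omega) (by omega)
    intro r hr
    have e1 : cc m (s - 1) r + r.choose s = (m + 1).choose s := by
      have := cc_eq m (s - 1) r (by omega)
      rwa [show s - 1 + 1 = s by omega] at this
    have e2 : cc m (m - s) r + r.choose (m - s + 1) = (m + 1).choose (m - s + 1) := by
      have := cc_eq m (m - s) r (by omega)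
      rwa [show m - s + 1 = m - s + 1 by rfl] at this
    have c1 : (m + 1).choose (m - s + 1) = (m + 1).choose s := by
      rw [show m - s + 1 = (m + 1) - s by omega]
      exact Nat.choose_symm (by omega)
    have hM : r.choose (m - s + 1) ≤ r.choose s := chooseM r (m - s + 1) s (by omega) (by omega)
    omega
end

section
/- If P(x) = ∑_{k=0}^m a_k x^k with 0 < a_0 ≤ a_1 ≤ ... ≤ a_m, then the coefficient sequence of P(x+1) is log-concave: writing P(x+1) = ∑ b_k x^k, we have b_k² ≥ b_{k-1} b_{k+1} for 1 ≤ k ≤ m-1. -/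
open Finset

lemma hockey (K : ℕ) : ∀ n l : ℕ, l ≤ n →
    l.choose (K+1) + ∑ j ∈ Finset.Ico l n, j.choose K = n.choose (K+1) := by
  intro n
  induction n with
  | zero => intro l hl; interval_cases l; simp
  | succ n ih =>
    intro l hl
    rcases Nat.eq_or_lt_of_le hl with rfl | h
    · simp
    · rw [Finset.sum_Ico_succ_top (by omega), ← add_assoc, ih l (by omega),
        Nat.choose_succ_succ n K]
      exact Nat.add_comm _ _

lemma ineq1 (j q M : ℕ) (h : j ≤ M) :
    (q+1) * j.choose (q+1) ≤ (M - q) * j.choose q := by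
  have h1 := Nat.choose_succ_right_eq j q
  calc (q+1) * j.choose (q+1) = j.choose q * (j - q) := by rw [mul_comm, h1]
    _ ≤ j.choose q * (M - q) := Nat.mul_le_mul_left _ (by omega)
    _ = (M - q) * j.choose q := mul_comm _ _

open Finset in
theorem stmt_8 (m : ℕ) (a b : ℕ → ℝ)
    (hpos : 0 < a 0)
    (hmono : ∀ k, k + 1 ≤ m → a k ≤ a (k + 1))
    (hb : ∀ k ≤ m, b k = ∑ j ∈ Icc k m, (j.choose k : ℝ) * a j) :
    ∀ k : ℕ, 1 ≤ k → k + 1 ≤ m → b (k - 1) * b (k + 1) ≤ b k ^ 2 := by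
  set F : ℕ → ℕ → ℕ := fun K t => ∑ j ∈ Finset.Ico t (m+1), j.choose K with hF
  set d : ℕ → ℝ := fun t => match t with
    | 0 => a 0
    | (t+1) => a (t+1) - a t
    with hdd
  have hd : ∀ t, t ≤ m → 0 ≤ d t := by
    intro t ht
    match t with
    | 0 => exact hpos.le
    | (t+1) => simpa [hdd] using hmono t ht
  have ha : ∀ j, j ≤ m → a j = ∑ t ∈ range (j+1), d t := by
    intro j
    induction j with
    | zero => intro _; simp [hdd]
    | succ j ih =>
      intro hj
      rw [Finset.sum_range_succ, ← ih (by omega)]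
      simp [hdd]
  have hFc : ∀ K t, t ≤ m → t.choose (K+1) + F K t = (m+1).choose (K+1) := by
    intro K t ht; exact hockey K (m+1) t (by omega)
  -- representation of b
  have hbF : ∀ K, K ≤ m → b K = ∑ t ∈ range (m+1), d t * (F K t : ℝ) := by
    intro K hK
    rw [hb K hK]
    have step1 : ∀ j ∈ Icc K m, (j.choose K : ℝ) * a j
        = ∑ t ∈ range (m+1), (if t ≤ j then (j.choose K : ℝ) * d t else 0) := by
      intro j hj
      rw [mem_Icc] at hj
      rw [ha j hj.2, Finset.mul_sum]
      rw [← Finset.sum_subset (Finset.range_subset_range.2 (by omega : j+1 ≤ m+1))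
        (fun t _ ht => by rw [if_neg (by simpa using ht)])]
      exact Finset.sum_congr rfl fun t ht => by
        rw [if_pos (by simpa [Nat.lt_succ_iff] using ht)]
    rw [Finset.sum_congr rfl step1, Finset.sum_comm]
    refine Finset.sum_congr rfl fun t ht => ?_
    rw [Finset.mem_range, Nat.lt_succ_iff] at ht
    rw [Finset.sum_ite, Finset.sum_const_zero, add_zero]
    have hfil : (Icc K m).filter (fun j => t ≤ j) = Icc (max K t) m := by
      ext j; simp only [mem_filter, mem_Icc, max_le_iff]; omega
    rw [hfil]
    have hsum : ∑ j ∈ Icc (max K t) m, (j.choose K : ℝ) * d t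
        = (∑ j ∈ Icc (max K t) m, (j.choose K : ℝ)) * d t := by
      rw [Finset.sum_mul]
    rw [hsum]
    have hFt : ∑ j ∈ Icc (max K t) m, (j.choose K : ℝ) = (F K t : ℝ) := by
      rw [hF]
      push_cast
      refine Finset.sum_subset ?_ ?_
      · intro j hj; rw [mem_Icc] at hj; rw [Finset.mem_Ico]; omega
      · intro j hj hj'
        rw [Finset.mem_Ico] at hj
        rw [mem_Icc] at hj'
        have : j < K := by omega
        simp [Nat.choose_eq_zero_of_lt this]
    rw [hFt, mul_comm]
  -- key inequalities
  have key1 : ∀ p t, t ≤ m → (p+2) * F (p+2) t ≤ (m - (p+1)) * F (p+1) t := by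
    intro p t ht
    rw [hF, Finset.mul_sum, Finset.mul_sum]
    refine Finset.sum_le_sum fun j hj => ?_
    rw [Finset.mem_Ico] at hj
    exact ineq1 j (p+1) m (by omega)
  have key2 : ∀ p s, p + 2 ≤ m → s ≤ m → (m - (p+1)) * F p s ≤ (p+2) * F (p+1) s := by
    intro p s hp hs
    have hx := hFc p s hs
    have hy := hFc (p+1) s hs
    have fa := Nat.choose_succ_right_eq (m+1) (p+1)
    have fb := ineq1 s (p+1) m hs
    have hmp : m + 1 - (p+1) = m - p := by omega
    rw [hmp] at fa
    -- cast to ℝ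
    rw [← Nat.cast_le (α := ℝ)]
    push_cast
    have hc1 : ((m - (p+1) : ℕ) : ℝ) = (m : ℝ) - (p+1) := by
      rw [Nat.cast_sub (by omega)]; push_cast; ring
    have hc2 : ((m - p : ℕ) : ℝ) = (m : ℝ) - p := by
      rw [Nat.cast_sub (by omega)]
    have hxr : (s.choose (p+1) : ℝ) + F p s = (m+1).choose (p+1) := by exact_mod_cast hx
    have hyr : (s.choose (p+2) : ℝ) + F (p+1) s = (m+1).choose (p+2) := by exact_mod_cast hy
    have far : ((m+1).choose (p+2) : ℝ) * (p+2) = (m+1).choose (p+1) * ((m:ℝ) - p) := by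
      rw [← hc2]; exact_mod_cast fa
    have fbr : ((p+2) : ℝ) * s.choose (p+2) ≤ ((m:ℝ) - (p+1)) * s.choose (p+1) := by
      rw [← hc1]; exact_mod_cast fb
    have hch : (0:ℝ) ≤ (m+1).choose (p+1) := Nat.cast_nonneg _
    rw [hc1]
    nlinarith [hxr, hyr, far, fbr, hch]
  have keyB : ∀ p s t, p + 2 ≤ m → s ≤ m → t ≤ m →
      F p s * F (p+2) t ≤ F (p+1) s * F (p+1) t := by
    intro p s t hp hs ht
    have hpos' : 0 < (p+2) * (m - (p+1)) := by
      apply Nat.mul_pos <;> omega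
    apply Nat.le_of_mul_le_mul_right _ hpos'
    calc F p s * F (p+2) t * ((p+2) * (m - (p+1)))
        = ((m - (p+1)) * F p s) * ((p+2) * F (p+2) t) := by ring
      _ ≤ ((p+2) * F (p+1) s) * ((m - (p+1)) * F (p+1) t) :=
          Nat.mul_le_mul (key2 p s hp hs) (key1 p t ht)
      _ = F (p+1) s * F (p+1) t * ((p+2) * (m - (p+1))) := by ring
  -- assembly
  intro k hk1 hkm
  obtain ⟨p, rfl⟩ : ∃ p, k = p + 1 := ⟨k - 1, by omega⟩
  have h0 : p + 1 + 1 - 1 + 1 = p + 2 := by omega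
  have e0 : p + 1 - 1 = p := by omega
  rw [e0]
  have hbp := hbF p (by omega)
  have hbp1 := hbF (p+1) (by omega)
  have hbp2 := hbF (p+2) (by omega)
  rw [hbp, show p + 1 + 1 = p + 2 from rfl, hbp2, hbp1, sq, Finset.sum_mul_sum,
    Finset.sum_mul_sum]
  refine Finset.sum_le_sum fun s hs => Finset.sum_le_sum fun t ht => ?_
  rw [Finset.mem_range, Nat.lt_succ_iff] at hs ht
  have hds := hd s hs
  have hdt := hd t ht
  have hB : (F p s : ℝ) * F (p+2) t ≤ (F (p+1) s : ℝ) * F (p+1) t := by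
    exact_mod_cast keyB p s t (by omega) hs ht
  calc d s * (F p s : ℝ) * (d t * (F (p+2) t : ℝ))
      = (d s * d t) * ((F p s : ℝ) * F (p+2) t) := by ring
    _ ≤ (d s * d t) * ((F (p+1) s : ℝ) * F (p+1) t) :=
        mul_le_mul_of_nonneg_left hB (mul_nonneg hds hdt)
    _ = d s * (F (p+1) s : ℝ) * (d t * (F (p+1) t : ℝ)) := by ring
end

section
/- If P(x) = ∑_{k=0}^m a_k x^k with 0 < a_0 ≤ a_1 ≤ ... ≤ a_m and m ≥ 2, then writing P(x+1) = ∑ b_k x^k we have b_0/b_{m-1} ≤ b_1/b_{m-2}, i.e., (∑_{k=0}^m a_k)·(a_{m-2} + (m-1)a_{m-1} + C(m,2)a_m) ≤ (∑_{k=0}^m k·a_k)·(a_{m-1} + m·a_m). -/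
open Finset in
theorem stmt_9 (m : ℕ) (hm : 2 ≤ m) (a : ℕ → ℝ)
    (hpos : 0 < a 0)
    (hmono : ∀ k, k + 1 ≤ m → a k ≤ a (k + 1)) :
    (∑ k ∈ range (m + 1), a k) *
        (a (m - 2) + ((m : ℝ) - 1) * a (m - 1) + (m.choose 2 : ℝ) * a m) ≤
      (∑ k ∈ range (m + 1), (k : ℝ) * a k) * (a (m - 1) + (m : ℝ) * a m) := by
  -- monotonicity of a on [0, m]
  have amono : ∀ i j, i ≤ j → j ≤ m → a i ≤ a j := by
    intro i j hij hjm
    induction j with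
    | zero => simp_all
    | succ n ih =>
      rcases Nat.lt_or_ge i (n+1) with h | h
      · exact le_trans (ih (by omega) (by omega)) (hmono n hjm)
      · have : i = n + 1 := by omega
        simp [this]
  have apos : ∀ k, k ≤ m → 0 < a k := fun k hk => lt_of_lt_of_le hpos (amono 0 k (Nat.zero_le _) hk)
  set S0 := ∑ k ∈ range (m + 1), a k with hS0
  set S1 := ∑ k ∈ range (m + 1), (k : ℝ) * a k with hS1
  -- Chebyshev
  have hmv : MonovaryOn (fun k : ℕ => (k : ℝ)) a (range (m+1)) := by
    intro i hi j hj hij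
    by_contra h
    push_neg at h
    have : j ≤ i := by exact_mod_cast Nat.lt_of_lt_of_le (by exact_mod_cast h) (le_refl i) |>.le
    exact absurd (amono j i this (by simpa using Nat.lt_succ_iff.mp (mem_range.mp hi))) (not_le.mpr hij)
  have hcheb := hmv.sum_mul_sum_le_card_mul_sum
  have hsumid : (∑ k ∈ range (m + 1), (k : ℝ)) = m * (m + 1) / 2 := by
    have h2 := Finset.sum_range_id_mul_two (m + 1)
    have h3 : ((∑ i ∈ range (m+1), i : ℕ) : ℝ) * 2 = ((m+1) * m : ℕ) := by
      exact_mod_cast congrArg (Nat.cast : ℕ → ℝ) h2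
    rw [Nat.cast_sum] at h3
    push_cast at h3 ⊢
    linarith
  rw [hsumid, card_range] at hcheb
  push_cast at hcheb
  rw [← hS0, ← hS1] at hcheb
  have hS : (m : ℝ) * S0 ≤ 2 * S1 := by
    have hm1 : (0:ℝ) < (m:ℝ) + 1 := by positivity
    nlinarith [hcheb]
  have hS0pos : 0 < S0 := by
    apply Finset.sum_pos
    · intro k hk; exact apos k (Nat.lt_succ_iff.mp (mem_range.mp hk))
    · exact ⟨0, mem_range.mpr (Nat.succ_pos m)⟩
  have hcd : a (m - 2) ≤ a (m - 1) := by
    have h : m - 2 + 1 = m - 1 := by omega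
    have := hmono (m - 2) (by omega)
    rwa [h] at this
  have hde : a (m - 1) ≤ a m := by
    have h : m - 1 + 1 = m := by omega
    have := hmono (m - 1) (by omega)
    rwa [h] at this
  have hce : a (m - 2) ≤ a m := le_trans hcd hde
  have hdpos : 0 < a (m - 1) := apos _ (by omega)
  have hepos : 0 < a m := apos _ le_rfl
  have hch : (m.choose 2 : ℝ) = m * (m - 1) / 2 := Nat.cast_choose_two (K := ℝ) m
  have hm2 : (2:ℝ) ≤ (m:ℝ) := by exact_mod_cast hm
  have hX : a (m - 2) + ((m : ℝ) - 1) * a (m - 1) + (m.choose 2 : ℝ) * a m ≤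
      ((m:ℝ)/2) * (a (m - 1) + (m:ℝ) * a m) := by
    rw [hch]
    nlinarith [hce, hde, hepos, hdpos]
  have hpos2 : 0 < a (m - 1) + (m:ℝ) * a m := by positivity
  calc S0 * (a (m - 2) + ((m : ℝ) - 1) * a (m - 1) + (m.choose 2 : ℝ) * a m)
      ≤ S0 * (((m:ℝ)/2) * (a (m - 1) + (m:ℝ) * a m)) :=
        mul_le_mul_of_nonneg_left hX hS0pos.le
    _ ≤ S1 * (a (m - 1) + (m:ℝ) * a m) := by nlinarith [hS, hpos2, hS0pos]
end

section
/- If P(x) = ∑_{k=0}^m a_k x^k with 0 < a_0 ≤ a_1 ≤ ... ≤ a_m, then for any real c ≥ 1 the coefficient sequence of P(x+c) is log-concave and all coefficients of P(x+c) are positive. -/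
open Finset

lemma hock (i : ℕ) : ∀ x N : ℕ, x ≤ N →
    x.choose (i+1) + ∑ r ∈ Ico x N, r.choose i = N.choose (i+1) := by
  intro x N h
  induction N, h using Nat.le_induction with
  | base => simp
  | succ N h ih =>
    rw [Finset.sum_Ico_succ_top h, ← add_assoc, ih, Nat.choose_succ_succ]
    simp only [Nat.succ_eq_add_one]
    omega

lemma hockR (i x N : ℕ) (h : x ≤ N) :
    (N.choose (i+1) : ℝ) - (x.choose (i+1) : ℝ) = ∑ r ∈ Ico x N, (r.choose i : ℝ) := by
  have h1 := hock i x N h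
  have h2 : ((x.choose (i+1) + ∑ r ∈ Ico x N, r.choose i : ℕ) : ℝ) = (N.choose (i+1) : ℝ) := by
    rw [h1]
  push_cast at h2
  linarith

lemma deltaSum (j N x : ℕ) (hx : x ≤ N) :
    ((j:ℝ)+2) * ((N.choose (j+2):ℝ) - x.choose (j+2))
      - ((N:ℝ) - ((j:ℝ)+1)) * ((N.choose (j+1):ℝ) - (x.choose (j+1):ℝ))
    = ∑ r ∈ Ico x N, (((j:ℝ)+2) * (r.choose (j+1):ℝ) - ((N:ℝ) - ((j:ℝ)+1)) * (r.choose j : ℝ)) := by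
  rw [show j+2 = (j+1)+1 from rfl, hockR (j+1) x N hx, hockR j x N hx,
    Finset.sum_sub_distrib, Finset.mul_sum, Finset.mul_sum]

lemma dsign_pos (j N r : ℕ) (hjN : j + 2 ≤ N) (h : (j+1)*(N+1) ≤ (j+2)*(r+1)) :
    0 ≤ ((j:ℝ)+2) * (r.choose (j+1):ℝ) - ((N:ℝ) - ((j:ℝ)+1)) * (r.choose j : ℝ) := by
  rcases lt_or_ge r j with hr | hr
  · rw [Nat.choose_eq_zero_of_lt (by omega), Nat.choose_eq_zero_of_lt (by omega)]
    norm_num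
  · have hid : (r.choose (j+1) : ℝ) * ((j:ℝ)+1) = (r.choose j : ℝ) * ((r:ℝ) - j) := by
      have h0 := Nat.choose_succ_right_eq r j
      have h2 : ((r.choose (j+1) * (j+1) : ℕ) : ℝ) = ((r.choose j * (r - j) : ℕ) : ℝ) := by rw [h0]
      push_cast [Nat.cast_sub hr] at h2
      linarith
    have hcast : ((j:ℝ)+1)*((N:ℝ)+1) ≤ ((j:ℝ)+2)*((r:ℝ)+1) := by exact_mod_cast h
    have hch : (0:ℝ) ≤ (r.choose j : ℝ) := by positivity
    have key : 0 ≤ (((j:ℝ)+1)) * (((j:ℝ)+2) * (r.choose (j+1):ℝ) - ((N:ℝ) - ((j:ℝ)+1)) * (r.choose j : ℝ)) := by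
      nlinarith [hid, hcast, hch]
    exact (mul_nonneg_iff_of_pos_left (by positivity)).mp key

lemma dsign_neg (j N r : ℕ) (hjN : j + 2 ≤ N) (h : (j+2)*(r+1) < (j+1)*(N+1)) :
    ((j:ℝ)+2) * (r.choose (j+1):ℝ) - ((N:ℝ) - ((j:ℝ)+1)) * (r.choose j : ℝ) ≤ 0 := by
  have hNj : ((j:ℝ)+2) ≤ (N:ℝ) := by exact_mod_cast hjN
  rcases lt_or_ge r j with hr | hr
  · rw [Nat.choose_eq_zero_of_lt (by omega), Nat.choose_eq_zero_of_lt (by omega)]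
    norm_num
  · have hid : (r.choose (j+1) : ℝ) * ((j:ℝ)+1) = (r.choose j : ℝ) * ((r:ℝ) - j) := by
      have h0 := Nat.choose_succ_right_eq r j
      have h2 : ((r.choose (j+1) * (j+1) : ℕ) : ℝ) = ((r.choose j * (r - j) : ℕ) : ℝ) := by rw [h0]
      push_cast [Nat.cast_sub hr] at h2
      linarith
    have hcast : ((j:ℝ)+2)*((r:ℝ)+1) ≤ ((j:ℝ)+1)*((N:ℝ)+1) := by
      exact_mod_cast h.le
    have hch : (0:ℝ) ≤ (r.choose j : ℝ) := by positivity
    have key : (((j:ℝ)+1)) * (((j:ℝ)+2) * (r.choose (j+1):ℝ) - ((N:ℝ) - ((j:ℝ)+1)) * (r.choose j : ℝ)) ≤ 0 := by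
      nlinarith [hid, hcast, hch]
    nlinarith [key]

lemma L1R (j N x : ℕ) (hjN : j + 2 ≤ N) (hx : x ≤ N) :
    ((N:ℝ) - ((j:ℝ)+1)) * ((N.choose (j+1):ℝ) - x.choose (j+1))
      ≤ ((j:ℝ)+2) * ((N.choose (j+2):ℝ) - x.choose (j+2)) := by
  have hds := deltaSum j N x hx
  have hgoal : 0 ≤ ∑ r ∈ Ico x N, (((j:ℝ)+2) * (r.choose (j+1):ℝ) - ((N:ℝ) - ((j:ℝ)+1)) * (r.choose j : ℝ)) := by
    by_cases hT : (j+1)*(N+1) ≤ (j+2)*(x+1)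
    · apply Finset.sum_nonneg
      intro r hr
      rw [Finset.mem_Ico] at hr
      have hmul : (j+2)*(x+1) ≤ (j+2)*(r+1) := Nat.mul_le_mul_left (j+2) (by omega)
      exact dsign_pos j N r hjN (le_trans hT hmul)
    · push_neg at hT
      have hz := deltaSum j N 0 (Nat.zero_le N)
      have c1 : Nat.choose 0 (j+2) = 0 := Nat.choose_eq_zero_of_lt (by omega)
      have c2 : Nat.choose 0 (j+1) = 0 := Nat.choose_eq_zero_of_lt (by omega)
      rw [c1, c2] at hz
      have h0 := Nat.choose_succ_right_eq N (j+1)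
      have h2 : ((N.choose (j+1+1) * (j+1+1) : ℕ) : ℝ) = ((N.choose (j+1) * (N - (j+1)) : ℕ) : ℝ) := by
        rw [h0]
      push_cast [Nat.cast_sub (show j+1 ≤ N by omega)] at h2
      have hzero : ∑ r ∈ Ico 0 N, (((j:ℝ)+2) * (r.choose (j+1):ℝ) - ((N:ℝ) - ((j:ℝ)+1)) * (r.choose j : ℝ)) = 0 := by
        rw [← hz]
        push_cast
        linarith
      have hsplit := Finset.sum_Ico_consecutive
        (fun r => (((j:ℝ)+2) * (r.choose (j+1):ℝ) - ((N:ℝ) - ((j:ℝ)+1)) * (r.choose j : ℝ)))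
        (Nat.zero_le x) hx
      have hneg : ∑ r ∈ Ico 0 x, (((j:ℝ)+2) * (r.choose (j+1):ℝ) - ((N:ℝ) - ((j:ℝ)+1)) * (r.choose j : ℝ)) ≤ 0 := by
        apply Finset.sum_nonpos
        intro r hr
        rw [Finset.mem_Ico] at hr
        apply dsign_neg j N r hjN
        have hmul : (j+2)*(r+1) ≤ (j+2)*(x+1) := Nat.mul_le_mul_left (j+2) (by omega)
        omega
      rw [hzero] at hsplit
      linarith
  linarith [hgoal, hds.le, hds.ge]

lemma L2R (k N x : ℕ) (hkN : k + 2 ≤ N) (hx : x ≤ N) :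
    ((k:ℝ)+1) * ((N.choose (k+2):ℝ) - x.choose (k+2))
      ≤ ((N:ℝ) - ((k:ℝ)+1)) * ((N.choose (k+1):ℝ) - x.choose (k+1)) := by
  have hNk : ((k:ℝ)+2) ≤ (N:ℝ) := by exact_mod_cast hkN
  rw [show k+2 = (k+1)+1 from rfl, hockR (k+1) x N hx, hockR k x N hx,
    Finset.mul_sum, Finset.mul_sum]
  apply Finset.sum_le_sum
  intro r hr
  rw [Finset.mem_Ico] at hr
  rcases lt_or_ge r k with h | h
  · rw [Nat.choose_eq_zero_of_lt (by omega : r < k+1), Nat.choose_eq_zero_of_lt h]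
    norm_num
  · have hid : (r.choose (k+1) : ℝ) * ((k:ℝ)+1) = (r.choose k : ℝ) * ((r:ℝ) - k) := by
      have h0 := Nat.choose_succ_right_eq r k
      have h2 : ((r.choose (k+1) * (k+1) : ℕ) : ℝ) = ((r.choose k * (r - k) : ℕ) : ℝ) := by rw [h0]
      push_cast [Nat.cast_sub h] at h2
      linarith
    have hch : (0:ℝ) ≤ (r.choose k : ℝ) := by positivity
    have hrN : (r:ℝ) + 1 ≤ (N:ℝ) := by exact_mod_cast hr.2
    nlinarith

lemma keyIneq (N k s t : ℕ) (hk : 1 ≤ k) (hkN : k + 2 ≤ N) (hs : s ≤ N) (ht : t ≤ N) :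
    ((N.choose k : ℝ) - s.choose k) * ((N.choose (k+2):ℝ) - t.choose (k+2))
      ≤ ((N.choose (k+1):ℝ) - s.choose (k+1)) * ((N.choose (k+1):ℝ) - t.choose (k+1)) := by
  obtain ⟨j, rfl⟩ : ∃ j, k = j + 1 := ⟨k - 1, by omega⟩
  have e1 : j + 1 + 2 = j + 3 := by omega
  have e2 : j + 1 + 1 = j + 2 := by omega
  have hL1 := L1R j N s (by omega) hs
  have hL2 := L2R (j+1) N t (by omega) ht
  rw [e1, e2] at hL2
  push_cast at hL2
  rw [e1, e2]
  have hgs : (0:ℝ) ≤ (N.choose (j+1) : ℝ) - s.choose (j+1) := by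
    have := Nat.choose_le_choose (j+1) hs; simp only [sub_nonneg]; exact_mod_cast this
  have hgs2 : (0:ℝ) ≤ (N.choose (j+2) : ℝ) - s.choose (j+2) := by
    have := Nat.choose_le_choose (j+2) hs; simp only [sub_nonneg]; exact_mod_cast this
  have hgt : (0:ℝ) ≤ (N.choose (j+2) : ℝ) - t.choose (j+2) := by
    have := Nat.choose_le_choose (j+2) ht; simp only [sub_nonneg]; exact_mod_cast this
  have hgt3 : (0:ℝ) ≤ (N.choose (j+3) : ℝ) - t.choose (j+3) := by
    have := Nat.choose_le_choose (j+3) ht; simp only [sub_nonneg]; exact_mod_cast this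
  have hM : (0:ℝ) < (N:ℝ) - ((j:ℝ)+1) := by
    have : (j:ℝ) + 3 ≤ (N:ℝ) := by exact_mod_cast hkN
    linarith
  have hL2' : ((j:ℝ)+2) * ((N.choose (j+3):ℝ) - t.choose (j+3))
      ≤ ((N:ℝ) - ((j:ℝ)+1)) * ((N.choose (j+2):ℝ) - t.choose (j+2)) := by
    nlinarith [hL2, hgt]
  have hprod := mul_le_mul hL1 hL2' (by positivity) (by positivity)
  have hpos : (0:ℝ) < ((N:ℝ) - ((j:ℝ)+1)) * ((j:ℝ)+2) := by positivity
  nlinarith [hprod, hpos]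

lemma coreB (m k : ℕ) (A : ℕ → ℝ) (hA0 : 0 ≤ A 0)
    (hmA : ∀ j, j + 1 ≤ m → A j ≤ A (j+1)) (hk : 1 ≤ k) (hkm : k + 1 ≤ m) :
    (∑ j ∈ Icc (k-1) m, (j.choose (k-1) : ℝ) * A j) *
      (∑ j ∈ Icc (k+1) m, (j.choose (k+1) : ℝ) * A j)
    ≤ (∑ j ∈ Icc k m, (j.choose k : ℝ) * A j) ^ 2 := by
  set d : ℕ → ℝ := fun t => if t = 0 then A 0 else A t - A (t-1) with hd
  have htel : ∀ r : ℕ, ∑ t ∈ range (r+1), d t = A r := by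
    intro r
    induction r with
    | zero => simp [hd]
    | succ n ih =>
      rw [Finset.sum_range_succ, ih]
      simp [hd]
  have hdnn : ∀ t, t ≤ m → 0 ≤ d t := by
    intro t ht
    rcases Nat.eq_zero_or_pos t with rfl | htp
    · simpa [hd] using hA0
    · obtain ⟨n, rfl⟩ : ∃ n, t = n + 1 := ⟨t - 1, by omega⟩
      simp only [hd]
      rw [if_neg (by omega)]
      simp only [Nat.add_sub_cancel]
      have := hmA n (by omega)
      linarith
  have trans : ∀ i : ℕ, (∑ j ∈ Icc i m, (j.choose i : ℝ) * A j)
      = ∑ t ∈ range (m+1), d t * (((m+1).choose (i+1) : ℝ) - (t.choose (i+1) : ℝ)) := by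
    intro i
    have step1 : ∀ t ∈ range (m+1),
        d t * (((m+1).choose (i+1) : ℝ) - (t.choose (i+1) : ℝ))
        = ∑ r ∈ Ico t (m+1), d t * (r.choose i : ℝ) := by
      intro t ht
      rw [mem_range] at ht
      rw [hockR i t (m+1) (by omega), Finset.mul_sum]
    rw [Finset.sum_congr rfl step1]
    rw [Finset.sum_comm' (t' := range (m+1)) (s' := fun r => range (r+1))
      (by intro t r; simp only [mem_range, mem_Ico]; omega)]
    have step2 : ∀ r ∈ range (m+1),
        ∑ t ∈ range (r+1), d t * (r.choose i : ℝ) = (r.choose i : ℝ) * A r := by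
      intro r _
      rw [← Finset.sum_mul, htel r, mul_comm]
    rw [Finset.sum_congr rfl step2]

    apply Finset.sum_subset
    · intro x hx
      rw [mem_Icc] at hx
      rw [mem_range]
      omega
    · intro x hx hnx
      rw [mem_range] at hx
      rw [mem_Icc] at hnx
      rw [Nat.choose_eq_zero_of_lt (by omega)]
      simp
  have hk1 : k - 1 + 1 = k := by omega
  have hk2 : k + 1 + 1 = k + 2 := by omega
  rw [trans (k-1), trans k, trans (k+1), hk1, hk2]
  rw [Finset.sum_mul_sum, sq, Finset.sum_mul_sum]
  apply Finset.sum_le_sum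
  intro s hs
  apply Finset.sum_le_sum
  intro t ht
  rw [mem_range] at hs ht
  have hds : 0 ≤ d s := hdnn s (by omega)
  have hdt : 0 ≤ d t := hdnn t (by omega)
  have h1 : 0 ≤ d s * d t := mul_nonneg hds hdt
  have hkey := keyIneq (m+1) k s t hk (by omega) (by omega) (by omega)
  nlinarith [mul_le_mul_of_nonneg_left hkey h1]

open Finset in
theorem stmt_10 (m : ℕ) (a b : ℕ → ℝ) (c : ℝ) (hc : 1 ≤ c)
    (hpos : 0 < a 0)
    (hmono : ∀ k, k + 1 ≤ m → a k ≤ a (k + 1))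
    (hb : ∀ k ≤ m, b k = ∑ j ∈ Icc k m, (j.choose k : ℝ) * c ^ (j - k) * a j) :
    (∀ k ≤ m, 0 < b k) ∧
    (∀ k : ℕ, 1 ≤ k → k + 1 ≤ m → b (k - 1) * b (k + 1) ≤ b k ^ 2) := by
  have hc0 : (0:ℝ) < c := by linarith
  have apos : ∀ j, j ≤ m → 0 < a j := by
    intro j
    induction j with
    | zero => exact fun _ => hpos
    | succ n ih =>
      intro h
      exact lt_of_lt_of_le (ih (by omega)) (hmono n h)
  constructor
  · intro k hk
    rw [hb k hk]
    apply Finset.sum_pos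
    · intro j hj
      rw [mem_Icc] at hj
      have h1 : 0 < (j.choose k : ℝ) := by
        exact_mod_cast Nat.choose_pos hj.1
      have h2 : (0:ℝ) < c ^ (j - k) := by positivity
      have h3 := apos j hj.2
      positivity
    · exact ⟨k, by rw [mem_Icc]; omega⟩
  · intro k hk1 hkm
    set A : ℕ → ℝ := fun j => c ^ j * a j with hA
    have hA0 : 0 ≤ A 0 := by simp [hA]; positivity
    have hmA : ∀ j, j + 1 ≤ m → A j ≤ A (j+1) := by
      intro j hj
      simp only [hA]
      have h1 : c ^ j ≤ c ^ (j+1) := pow_le_pow_right₀ hc (by omega)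
      have h2 := hmono j hj
      have h3 := apos j (by omega)
      have h4 : (0:ℝ) < c ^ j := by positivity
      nlinarith
    have hcb : ∀ i, i ≤ m → c ^ i * b i = ∑ j ∈ Icc i m, (j.choose i : ℝ) * A j := by
      intro i hi
      rw [hb i hi, Finset.mul_sum]
      apply Finset.sum_congr rfl
      intro j hj
      rw [mem_Icc] at hj
      simp only [hA]
      have e : c ^ (j - i) * c ^ i = c ^ j := by
        rw [← pow_add]
        congr 1
        omega
      linear_combination ((j.choose i : ℝ) * a j) * e
    have hcore := coreB m k A hA0 hmA hk1 hkm
    rw [← hcb (k-1) (by omega), ← hcb k (by omega), ← hcb (k+1) (by omega)] at hcore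
    have hpow : c ^ (k-1) * c ^ (k+1) = c ^ k * c ^ k := by
      rw [← pow_add, ← pow_add]
      congr 1
      omega
    have hck : (0:ℝ) < c ^ k * c ^ k := by positivity
    nlinarith [hcore, hck, hpow]
end

section
/- The Boros–Moll coefficients c_k(m) = 2^{-2m+k}·C(2m-2k, m-k)·C(m+k, k) are strictly increasing in k: c_k(m) < c_{k+1}(m) for 0 ≤ k ≤ m-1. -/
noncomputable def bmCoeff (m k : ℕ) : ℝ :=
  (2 : ℝ) ^ k / (2 : ℝ) ^ (2 * m) * ((2 * m - 2 * k).choose (m - k) : ℝ) *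
    ((m + k).choose k : ℝ)

theorem stmt_12 (m k : ℕ) (hk : k ≤ m - 1) (hm : 1 ≤ m) :
    bmCoeff m k < bmCoeff m (k + 1) := by
  obtain ⟨p, hp⟩ : ∃ p, m = p + 1 + k := ⟨m - 1 - k, by omega⟩
  subst hp
  unfold bmCoeff
  have e1 : 2 * (p + 1 + k) - 2 * k = 2 * (p + 1) := by omega
  have e2 : p + 1 + k - k = p + 1 := by omega
  have e3 : 2 * (p + 1 + k) - 2 * (k + 1) = 2 * p := by omega
  have e4 : p + 1 + k - (k + 1) = p := by omega
  have e5 : p + 1 + k + (k + 1) = p + 1 + k + k + 1 := by omega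
  rw [e1, e2, e3, e4, e5]
  set A : ℝ := ((2 * (p + 1)).choose (p + 1) : ℝ) with hA
  set B : ℝ := ((p + 1 + k + k).choose k : ℝ) with hB
  set C : ℝ := ((2 * p).choose p : ℝ) with hC
  set D : ℝ := ((p + 1 + k + k + 1).choose (k + 1) : ℝ) with hD
  have hCpos : (0 : ℝ) < C := by
    have : 0 < (2 * p).choose p := Nat.choose_pos (by omega)
    rw [hC]; exact_mod_cast this
  have hBpos : (0 : ℝ) < B := by
    have : 0 < (p + 1 + k + k).choose k := Nat.choose_pos (by omega)
    rw [hB]; exact_mod_cast this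
  have h1R : ((p : ℝ) + 1) * A = 2 * (2 * (p : ℝ) + 1) * C := by
    have h1 : (p + 1) * (2 * (p + 1)).choose (p + 1) = 2 * (2 * p + 1) * (2 * p).choose p := by
      have := Nat.succ_mul_centralBinom_succ p
      simpa [Nat.centralBinom] using this
    rw [hA, hC]
    exact_mod_cast h1
  have h2R : ((k : ℝ) + 1) * D = ((p : ℝ) + 1 + k + k + 1) * B := by
    have h2 : (p + 1 + k + k + 1) * (p + 1 + k + k).choose k =
        (p + 1 + k + k + 1).choose (k + 1) * (k + 1) := by
      have := Nat.add_one_mul_choose_eq (p + 1 + k + k) k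
      simpa [Nat.succ_eq_add_one] using this
    have h2c : (((p + 1 + k + k + 1 : ℕ)) : ℝ) * ((p + 1 + k + k).choose k : ℝ) =
        ((p + 1 + k + k + 1).choose (k + 1) : ℝ) * ((k : ℝ) + 1) := by exact_mod_cast h2
    rw [hB, hD]
    push_cast at h2c ⊢
    linear_combination -h2c
  have coef : (2 * (2 * (p : ℝ) + 1)) * ((k : ℝ) + 1) <
      2 * ((p : ℝ) + 1) * ((p : ℝ) + 1 + k + k + 1) := by
    have hp0 : (0 : ℝ) ≤ (p : ℕ) := Nat.cast_nonneg p
    have hk0 : (0 : ℝ) ≤ (k : ℕ) := Nat.cast_nonneg k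
    nlinarith
  have main : A * B < 2 * C * D := by
    have hmid := mul_lt_mul_of_pos_right coef (mul_pos hCpos hBpos)
    have hlt : ((p : ℝ) + 1) * ((k : ℝ) + 1) * (A * B) <
        ((p : ℝ) + 1) * ((k : ℝ) + 1) * (2 * C * D) := by
      calc ((p : ℝ) + 1) * ((k : ℝ) + 1) * (A * B)
          = (2 * (2 * (p : ℝ) + 1)) * ((k : ℝ) + 1) * (C * B) := by
            linear_combination ((k : ℝ) + 1) * B * h1R
        _ < 2 * ((p : ℝ) + 1) * ((p : ℝ) + 1 + k + k + 1) * (C * B) := hmid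
        _ = ((p : ℝ) + 1) * ((k : ℝ) + 1) * (2 * C * D) := by
            linear_combination -2 * ((p : ℝ) + 1) * C * h2R
    exact lt_of_mul_lt_mul_left hlt (by positivity)
  have hpow : (0 : ℝ) < (2 : ℝ) ^ k / (2 : ℝ) ^ (2 * (p + 1 + k)) := by positivity
  have := mul_lt_mul_of_pos_left main hpow
  calc (2:ℝ) ^ k / 2 ^ (2 * (p + 1 + k)) * A * B
      = (2:ℝ) ^ k / 2 ^ (2 * (p + 1 + k)) * (A * B) := by ring
    _ < (2:ℝ) ^ k / 2 ^ (2 * (p + 1 + k)) * (2 * C * D) := this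
    _ = (2:ℝ) ^ (k + 1) / 2 ^ (2 * (p + 1 + k)) * C * D := by rw [pow_succ]; ring
end

section
/- The coefficient sequence of the Boros–Moll polynomial P_m(x) = ∑_{k=0}^m c_k(m)(x+1)^k, where c_k(m) = 2^{-2m+k}·C(2m-2k,m-k)·C(m+k,k), is ratio monotone for m ≥ 2. -/
open Finset

noncomputable def dd (m i : ℕ) : ℝ := ∑ j ∈ Icc i m, (j.choose i : ℝ) * bmCoeff m j

lemma bmCoeff_pos (m k : ℕ) : 0 < bmCoeff m k := by
  unfold bmCoeff
  have h1 : 0 < ((2 * m - 2 * k).choose (m - k) : ℝ) := by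
    exact_mod_cast Nat.choose_pos (by omega)
  have h2 : 0 < ((m + k).choose k : ℝ) := by
    exact_mod_cast Nat.choose_pos (by omega)
  positivity

lemma dd_nonneg (m i : ℕ) : 0 ≤ dd m i := by
  unfold dd
  refine Finset.sum_nonneg fun j hj => ?_
  exact mul_nonneg (by positivity) (bmCoeff_pos m j).le

lemma dd_pos (m i : ℕ) (h : i ≤ m) : 0 < dd m i := by
  unfold dd
  refine Finset.sum_pos (fun j hj => ?_) ⟨m, by simp [h]⟩
  simp only [mem_Icc] at hj
  exact mul_pos (by exact_mod_cast Nat.choose_pos hj.1) (bmCoeff_pos m j)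

lemma dd_eq_zero (m i : ℕ) (h : m < i) : dd m i = 0 := by
  unfold dd
  rw [Finset.Icc_eq_empty (by omega)]
  simp

lemma nat2 (m k : ℕ) : (m+k+1) * ((m+k).choose k) = (k+1) * ((m+k+1).choose (k+1)) := by
  have h := Nat.add_one_mul_choose_eq (m+k) k
  rw [h, mul_comm]

lemma nat3 (m k : ℕ) : (m+1) * ((m+k+2).choose (k+1)) = (m+k+2) * ((m+k+1).choose (k+1)) := by
  have h1 := Nat.add_one_mul_choose_eq (m+k+1) m
  have h2 : (m+k+1).choose m = (m+k+1).choose (k+1) := by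
    rw [← Nat.choose_symm (by omega : k+1 ≤ m+k+1)]; congr 1; omega
  have h3 : (m+k+1+1).choose (m+1) = (m+k+2).choose (k+1) := by
    rw [← Nat.choose_symm (by omega : k+1 ≤ m+k+1+1)]; congr 1; omega
  rw [h2, h3] at h1
  rw [h1, mul_comm]

lemma nat1 (b : ℕ) : (b+1) * ((2*b+2).choose (b+1)) = 2*(2*b+1) * ((2*b).choose b) := by
  have h1 := Nat.add_one_mul_choose_eq (2*b+1) b
  -- h1 : (2b+2) * C(2b+1, b) = C(2b+2, b+1) * (b+1)
  have h2 := Nat.add_one_mul_choose_eq (2*b) b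
  -- h2 : (2b+1) * C(2b, b) = C(2b+1, b+1) * (b+1)
  have h3 : (2*b+1).choose b = (2*b+1).choose (b+1) := by
    rw [← Nat.choose_symm (by omega : b+1 ≤ 2*b+1)]; congr 1; omega
  apply Nat.eq_of_mul_eq_mul_left (Nat.succ_pos b)
  calc (b+1) * ((b+1) * ((2*b+2).choose (b+1)))
      = (b+1) * ((2*b+2) * ((2*b+1).choose b)) := by
        rw [show (2*b+1+1) * ((2*b+1).choose b) = (2*b+1+1).choose (b+1) * (b+1) from by
              rw [← h1]]
        ring
    _ = (2*b+2) * ((2*b+1).choose (b+1) * (b+1)) := by rw [h3]; ring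
    _ = (2*b+2) * ((2*b+1) * ((2*b).choose b)) := by rw [← h2]
    _ = (b+1) * (2*(2*b+1) * ((2*b).choose b)) := by ring

lemma bm_recS (m k : ℕ) (hk : k < m) :
    2*((m:ℝ)+1) * bmCoeff (m+1) (k+1)
      = (2*(m:ℝ)+2*(k:ℝ)+2) * bmCoeff m k + (2*(m:ℝ)-2*(k:ℝ)-1) * bmCoeff m (k+1) := by
  obtain ⟨a, rfl⟩ : ∃ a, m = k + a + 1 := ⟨m - k - 1, by omega⟩
  unfold bmCoeff
  simp only [show 2 * (k + a + 1 + 1) - 2 * (k + 1) = 2*a+2 from by omega,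
    show (k + a + 1 + 1) - (k + 1) = a+1 from by omega,
    show (k + a + 1 + 1) + (k + 1) = a+2*k+3 from by omega,
    show 2 * (k + a + 1) - 2 * k = 2*a+2 from by omega,
    show (k + a + 1) - k = a+1 from by omega,
    show (k + a + 1) + k = a+2*k+1 from by omega,
    show 2 * (k + a + 1) - 2 * (k + 1) = 2*a from by omega,
    show (k + a + 1) - (k + 1) = a from by omega,
    show (k + a + 1) + (k + 1) = a+2*k+2 from by omega]
  have E1 : ((a:ℝ)+1) * ((2*a+2).choose (a+1) : ℝ) = 2*(2*(a:ℝ)+1) * ((2*a).choose a : ℝ) := by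
    exact_mod_cast congrArg (Nat.cast : ℕ → ℝ) (nat1 a)
  have E2 : ((a:ℝ)+2*(k:ℝ)+2) * ((a+2*k+1).choose k : ℝ)
      = ((k:ℝ)+1) * ((a+2*k+2).choose (k+1) : ℝ) := by
    have h := nat2 (a+k+1) k
    rw [show (a+k+1)+k+1 = a+2*k+2 from by omega,
        show (a+k+1)+k = a+2*k+1 from by omega] at h
    have := congrArg (Nat.cast : ℕ → ℝ) h
    push_cast at this
    linarith [this]
  have E3 : ((a:ℝ)+(k:ℝ)+2) * ((a+2*k+3).choose (k+1) : ℝ)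
      = ((a:ℝ)+2*(k:ℝ)+3) * ((a+2*k+2).choose (k+1) : ℝ) := by
    have h := nat3 (a+k+1) k
    rw [show (a+k+1)+k+2 = a+2*k+3 from by omega,
        show (a+k+1)+k+1 = a+2*k+2 from by omega,
        show (a+k+1)+1 = a+k+2 from by omega] at h
    have := congrArg (Nat.cast : ℕ → ℝ) h
    push_cast at this
    linarith [this]
  have hpow : (2:ℝ) ^ (2*(k+a+1+1)) = 2 ^ (2*(k+a+1)) * 4 := by
    rw [show 2*(k+a+1+1) = 2*(k+a+1)+2 from by omega, pow_add]; norm_num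
  have hpk : (2:ℝ) ^ (k+1) = 2 ^ k * 2 := by rw [pow_add]; norm_num
  rw [hpow, hpk]
  push_cast
  linear_combination ((2:ℝ)^k / (2:ℝ)^(2*(k+a+1))) *
    (((2*a+2).choose (a+1) : ℝ) * E3 - 2 * ((2*a+2).choose (a+1) : ℝ) * E2
      + ((a+2*k+2).choose (k+1) : ℝ) * E1)

lemma bm_rec0 (m : ℕ) :
    2*((m:ℝ)+1) * bmCoeff (m+1) 0 = (2*(m:ℝ)+1) * bmCoeff m 0 := by
  unfold bmCoeff
  simp only [Nat.sub_zero, Nat.add_zero, Nat.choose_zero_right, Nat.cast_one, pow_zero,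
    show 2*(m+1) = 2*m+2 from by omega, show (m:ℕ)+1 = m+1 from rfl]
  have E1 : ((m:ℝ)+1) * ((2*m+2).choose (m+1) : ℝ) = 2*(2*(m:ℝ)+1) * ((2*m).choose m : ℝ) := by
    exact_mod_cast congrArg (Nat.cast : ℕ → ℝ) (nat1 m)
  have hpow : (2:ℝ) ^ (2*m+2) = 2 ^ (2*m) * 4 := by rw [pow_add]; norm_num
  rw [hpow]
  have hq : ((2:ℝ) ^ (2*m)) ≠ 0 := by positivity
  field_simp
  simp only [mul_zero, Nat.sub_zero]
  linear_combination 2 * E1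

lemma bm_rec_top (m : ℕ) :
    2*((m:ℝ)+1) * bmCoeff (m+1) (m+1) = (4*(m:ℝ)+2) * bmCoeff m m := by
  unfold bmCoeff
  simp only [Nat.sub_self, Nat.choose_zero_right, Nat.cast_one,
    show 2*(m+1) - 2*(m+1) = 0 from by omega, show 2*m - 2*m = 0 from by omega,
    show (m+1) + (m+1) = 2*m+2 from by omega, show (m:ℕ) + m = 2*m from by omega,
    Nat.choose_self]
  have E1 : ((m:ℝ)+1) * ((2*m+2).choose (m+1) : ℝ) = 2*(2*(m:ℝ)+1) * ((2*m).choose m : ℝ) := by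
    exact_mod_cast congrArg (Nat.cast : ℕ → ℝ) (nat1 m)
  have hpow : (2:ℝ) ^ (2*(m+1)) = 2 ^ (2*m) * 4 := by
    rw [show 2*(m+1) = 2*m+2 from by omega, pow_add]; norm_num
  have hpk : (2:ℝ) ^ (m+1) = 2 ^ m * 2 := by rw [pow_add]; norm_num
  rw [hpow, hpk]
  field_simp
  linear_combination 4 * E1

lemma sum_shift (a b : ℕ) (f : ℕ → ℝ) :
    ∑ j ∈ Icc (a+1) (b+1), f j = ∑ k ∈ Icc a b, f (k+1) := by
  rw [← Finset.map_add_right_Icc a b 1, Finset.sum_map]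
  rfl

lemma sum_shift' (a b : ℕ) (f : ℕ → ℝ) :
    ∑ j ∈ Icc (a+1) b, f j = ∑ k ∈ Ico a b, f (k+1) := by
  rcases Nat.eq_zero_or_pos b with hb | hb
  · subst hb; simp
  · obtain ⟨c, rfl⟩ := Nat.exists_eq_add_of_le hb
    rw [show 1 + c = c + 1 from by omega, ← Finset.Ico_add_one_right_eq_Icc, ← Finset.map_add_right_Ico a (c+1) 1,
        Finset.sum_map, Finset.Ico_add_one_right_eq_Icc]
    rfl

lemma sum_peel_bot (i m : ℕ) (him : i ≤ m) (f : ℕ → ℝ) :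
    ∑ k ∈ Icc i m, f k = f i + ∑ k ∈ Icc (i+1) m, f k := by
  rw [Finset.Icc_eq_cons_Ioc him, Finset.sum_cons, ← Finset.Icc_add_one_left_eq_Ioc]

lemma coeff_id (m i k : ℕ) (hik : i ≤ k) :
    (2*(m:ℝ)+2*(k:ℝ)+2) * ((k+1).choose (i+1) : ℝ) + (2*(m:ℝ)-2*(k:ℝ)+1) * ((k).choose (i+1) : ℝ)
      = (2*(m:ℝ)+2*(i:ℝ)+2) * ((k).choose i : ℝ) + (4*(m:ℝ)+2*(i:ℝ)+5) * ((k).choose (i+1) : ℝ) := by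
  have hp : ((k+1).choose (i+1) : ℝ) = (k.choose i : ℝ) + (k.choose (i+1) : ℝ) := by
    exact_mod_cast congrArg (Nat.cast : ℕ → ℝ) (Nat.choose_succ_succ' k i)
  have hr : ((k).choose (i+1) : ℝ) * ((i:ℝ)+1) = ((k).choose i : ℝ) * ((k:ℝ)-(i:ℝ)) := by
    have := congrArg (Nat.cast : ℕ → ℝ) (Nat.choose_succ_right_eq k i)
    push_cast at this
    rw [Nat.cast_sub hik] at this
    push_cast at this
    linarith [this]
  rw [hp]
  linarith [hr]

lemma ddrecS (m i : ℕ) :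
    2*((m:ℝ)+1) * dd (m+1) (i+1)
      = (2*(m:ℝ)+2*(i:ℝ)+2) * dd m i + (4*(m:ℝ)+2*(i:ℝ)+5) * dd m (i+1) := by
  rcases lt_or_ge m i with him | him
  · rw [dd_eq_zero (m+1) (i+1) (by omega), dd_eq_zero m i him, dd_eq_zero m (i+1) (by omega)]
    ring
  have hL : 2*((m:ℝ)+1) * dd (m+1) (i+1)
      = ∑ k ∈ Icc i m, 2*((m:ℝ)+1) * (((k+1).choose (i+1) : ℝ) * bmCoeff (m+1) (k+1)) := by
    unfold dd
    rw [sum_shift i m, Finset.mul_sum]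
  have hterm : ∀ k ∈ Icc i m,
      2*((m:ℝ)+1) * (((k+1).choose (i+1) : ℝ) * bmCoeff (m+1) (k+1))
        = (2*(m:ℝ)+2*(k:ℝ)+2) * ((k+1).choose (i+1) : ℝ) * bmCoeff m k
          + (if k = m then 0 else
              (2*(m:ℝ)-2*(k:ℝ)-1) * ((k+1).choose (i+1) : ℝ) * bmCoeff m (k+1)) := by
    intro k hk
    simp only [mem_Icc] at hk
    rcases eq_or_lt_of_le hk.2 with hkm | hkm
    · subst hkm
      rw [if_pos rfl]
      nlinarith [bm_rec_top k]
    · rw [if_neg (by omega)]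
      nlinarith [bm_recS m k hkm]
  rw [hL, Finset.sum_congr rfl hterm, Finset.sum_add_distrib]
  have hite : ∑ k ∈ Icc i m, (if k = m then 0 else
        (2*(m:ℝ)-2*(k:ℝ)-1) * ((k+1).choose (i+1) : ℝ) * bmCoeff m (k+1))
      = ∑ k ∈ Icc (i+1) m, (2*(m:ℝ)-2*(k:ℝ)+1) * ((k).choose (i+1) : ℝ) * bmCoeff m k := by
    rw [← Finset.Ico_add_one_right_eq_Icc i m, Finset.sum_Ico_succ_top him, if_pos rfl, add_zero]
    rw [sum_shift' i m (fun k => (2*(m:ℝ)-2*(k:ℝ)+1) * ((k).choose (i+1) : ℝ) * bmCoeff m k)]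
    refine Finset.sum_congr rfl fun k hk => ?_
    simp only [mem_Ico] at hk
    rw [if_neg (by omega)]
    push_cast
    ring
  rw [hite]
  -- split bottom terms
  have hsplit1 : ∑ k ∈ Icc i m, (2*(m:ℝ)+2*(k:ℝ)+2) * ((k+1).choose (i+1) : ℝ) * bmCoeff m k
      = (2*(m:ℝ)+2*(i:ℝ)+2) * bmCoeff m i
        + ∑ k ∈ Icc (i+1) m, (2*(m:ℝ)+2*(k:ℝ)+2) * ((k+1).choose (i+1) : ℝ) * bmCoeff m k := by
    rw [sum_peel_bot i m him]
    simp [Nat.choose_self]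
  have hdd1 : dd m i = bmCoeff m i + ∑ k ∈ Icc (i+1) m, ((k).choose i : ℝ) * bmCoeff m k := by
    unfold dd
    rw [sum_peel_bot i m him]
    simp [Nat.choose_self]
  have hdd2 : dd m (i+1) = ∑ k ∈ Icc (i+1) m, ((k).choose (i+1) : ℝ) * bmCoeff m k := rfl
  rw [hsplit1, hdd1, hdd2]
  rw [add_assoc, ← Finset.sum_add_distrib]
  have hfin : ∀ k ∈ Icc (i+1) m,
      (2*(m:ℝ)+2*(k:ℝ)+2) * ((k+1).choose (i+1) : ℝ) * bmCoeff m k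
        + (2*(m:ℝ)-2*(k:ℝ)+1) * ((k).choose (i+1) : ℝ) * bmCoeff m k
      = (2*(m:ℝ)+2*(i:ℝ)+2) * (((k).choose i : ℝ) * bmCoeff m k)
        + (4*(m:ℝ)+2*(i:ℝ)+5) * (((k).choose (i+1) : ℝ) * bmCoeff m k) := by
    intro k hk
    simp only [mem_Icc] at hk
    linear_combination bmCoeff m k * coeff_id m i k (by omega)
  rw [Finset.sum_congr rfl hfin, Finset.sum_add_distrib,
     mul_add (2*(m:ℝ)+2*(i:ℝ)+2), Finset.mul_sum, Finset.mul_sum]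
  ring

lemma ddrec0 (m : ℕ) :
    2*((m:ℝ)+1) * dd (m+1) 0 = (4*(m:ℝ)+3) * dd m 0 := by
  have hdd : dd (m+1) 0 = bmCoeff (m+1) 0 + ∑ k ∈ Icc 0 m, bmCoeff (m+1) (k+1) := by
    unfold dd
    rw [sum_peel_bot 0 (m+1) (by omega), sum_shift 0 m]
    simp [Nat.choose_zero_right]
  have hterm : ∀ k ∈ Icc 0 m,
      2*((m:ℝ)+1) * bmCoeff (m+1) (k+1)
        = (2*(m:ℝ)+2*(k:ℝ)+2) * bmCoeff m k
          + (if k = m then 0 else (2*(m:ℝ)-2*(k:ℝ)-1) * bmCoeff m (k+1)) := by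
    intro k hk
    simp only [mem_Icc] at hk
    rcases eq_or_lt_of_le hk.2 with hkm | hkm
    · subst hkm
      rw [if_pos rfl]
      nlinarith [bm_rec_top k]
    · rw [if_neg (by omega)]
      nlinarith [bm_recS m k hkm]
  have hite : ∑ k ∈ Icc 0 m, (if k = m then 0 else (2*(m:ℝ)-2*(k:ℝ)-1) * bmCoeff m (k+1))
      = ∑ k ∈ Icc 1 m, (2*(m:ℝ)-2*(k:ℝ)+1) * bmCoeff m k := by
    rw [← Finset.Ico_add_one_right_eq_Icc 0 m, Finset.sum_Ico_succ_top (by omega), if_pos rfl, add_zero]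
    rw [show Icc 1 m = Icc (0 + 1) m from rfl, sum_shift' 0 m (fun k => (2*(m:ℝ)-2*(k:ℝ)+1) * bmCoeff m k)]
    refine Finset.sum_congr rfl fun k hk => ?_
    simp only [mem_Ico] at hk
    rw [if_neg (by omega)]
    push_cast
    ring
  have hR1 : dd m 0 = bmCoeff m 0 + ∑ k ∈ Icc 1 m, bmCoeff m k := by
    unfold dd
    rw [sum_peel_bot 0 m (by omega)]
    simp [Nat.choose_zero_right]
  have hS1 : ∑ k ∈ Icc 0 m, (2*(m:ℝ)+2*(k:ℝ)+2) * bmCoeff m k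
      = (2*(m:ℝ)+2) * bmCoeff m 0 + ∑ k ∈ Icc 1 m, (2*(m:ℝ)+2*(k:ℝ)+2) * bmCoeff m k := by
    rw [sum_peel_bot 0 m (by omega)]
    norm_num
  calc 2*((m:ℝ)+1) * dd (m+1) 0
      = 2*((m:ℝ)+1) * bmCoeff (m+1) 0 + ∑ k ∈ Icc 0 m, 2*((m:ℝ)+1) * bmCoeff (m+1) (k+1) := by
        rw [hdd, mul_add, Finset.mul_sum]
    _ = (2*(m:ℝ)+1) * bmCoeff m 0
        + (∑ k ∈ Icc 0 m, (2*(m:ℝ)+2*(k:ℝ)+2) * bmCoeff m k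
           + ∑ k ∈ Icc 1 m, (2*(m:ℝ)-2*(k:ℝ)+1) * bmCoeff m k) := by
        rw [bm_rec0 m, Finset.sum_congr rfl hterm, Finset.sum_add_distrib, hite]
    _ = (4*(m:ℝ)+3) * bmCoeff m 0
        + ∑ k ∈ Icc 1 m, ((2*(m:ℝ)+2*(k:ℝ)+2) * bmCoeff m k + (2*(m:ℝ)-2*(k:ℝ)+1) * bmCoeff m k) := by
        rw [hS1, Finset.sum_add_distrib]
        ring
    _ = (4*(m:ℝ)+3) * dd m 0 := by
        rw [Finset.sum_congr rfl (fun k _ => by ring :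
              ∀ k ∈ Icc 1 m, (2*(m:ℝ)+2*(k:ℝ)+2) * bmCoeff m k + (2*(m:ℝ)-2*(k:ℝ)+1) * bmCoeff m k
                = (4*(m:ℝ)+3) * bmCoeff m k),
           hR1, mul_add, Finset.mul_sum]

lemma lemL : ∀ m i : ℕ, i + 1 ≤ m → ((i:ℝ)+1) * dd m (i+1) ≤ ((m:ℝ) - i) * dd m i := by
  intro m
  induction m with
  | zero => intro i hi; omega
  | succ n ih =>
    intro i hi
    have hpos : (0:ℝ) < 2*((n:ℝ)+1) := by positivity
    refine le_of_mul_le_mul_left ?_ hpos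
    rcases i with _ | i'
    · -- i = 0
      have hb : (1:ℝ) * dd n 1 ≤ ((n:ℝ) - 0) * dd n 0 := by
        rcases Nat.eq_zero_or_pos n with h | h
        · subst h; rw [dd_eq_zero 0 1 (by omega)]; simp
        · have := ih 0 (by omega)
          push_cast at this ⊢
          linarith [this]
      have e1 : 2*((n:ℝ)+1) * (((0:ℕ):ℝ)+1) * dd (n+1) (0+1)
          = ((2*(n:ℝ)+2*((0:ℕ):ℝ)+2) * dd n 0 + (4*(n:ℝ)+2*((0:ℕ):ℝ)+5) * dd n (0+1)) := by
        linear_combination ddrecS n 0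
      have e2 : 2*((n:ℝ)+1) * ((((n:ℕ)+1:ℕ):ℝ) - ((0:ℕ):ℝ)) * dd (n+1) 0
          = (((n:ℕ)+1:ℕ):ℝ) * ((4*(n:ℝ)+3) * dd n 0) := by
        push_cast
        linear_combination ((n:ℝ)+1) * ddrec0 n
      calc 2*((n:ℝ)+1) * ((((0:ℕ):ℝ)+1) * dd (n+1) (0+1))
          = (2*(n:ℝ)+2) * dd n 0 + (4*(n:ℝ)+5) * dd n 1 := by
            push_cast at e1 ⊢; linarith [e1]
        _ ≤ (((n:ℕ)+1:ℕ):ℝ) * ((4*(n:ℝ)+3) * dd n 0) := by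
            push_cast
            nlinarith [hb, dd_nonneg n 0, dd_nonneg n 1,
              mul_le_mul_of_nonneg_left hb (by positivity : (0:ℝ) ≤ 4*(n:ℝ)+5)]
        _ = 2*((n:ℝ)+1) * (((((n:ℕ)+1:ℕ)):ℝ) - ((0:ℕ):ℝ)) * dd (n+1) 0 := by rw [e2]
        _ = 2*((n:ℝ)+1) * ((((((n:ℕ)+1:ℕ)):ℝ) - ((0:ℕ):ℝ)) * dd (n+1) 0) := by ring
    · -- i = i'+1
      have hIH1 : ((i':ℝ)+1) * dd n (i'+1) ≤ ((n:ℝ) - i') * dd n i' := ih i' (by omega)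
      have hIH2 : ((i':ℝ)+2) * dd n (i'+2) ≤ ((n:ℝ) - i' - 1) * dd n (i'+1) := by
        rcases lt_or_ge (i'+2) (n+1) with h | h
        · have := ih (i'+1) (by omega)
          push_cast at this
          linarith [this]
        · have hz : dd n (i'+2) = 0 := dd_eq_zero n (i'+2) (by omega)
          have : i' + 1 = n := by omega
          rw [hz]
          rw [show ((n:ℝ) - i' - 1) = 0 from by rw [← this]; push_cast; ring]
          simp
      have e1 : 2*((n:ℝ)+1) * dd (n+1) (i'+2)
          = (2*(n:ℝ)+2*(i':ℝ)+4) * dd n (i'+1) + (4*(n:ℝ)+2*(i':ℝ)+7) * dd n (i'+2) := by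
        have := ddrecS n (i'+1)
        push_cast at this
        linarith [this]
      have e2 : 2*((n:ℝ)+1) * dd (n+1) (i'+1)
          = (2*(n:ℝ)+2*(i':ℝ)+2) * dd n i' + (4*(n:ℝ)+2*(i':ℝ)+5) * dd n (i'+1) := ddrecS n i'
      have hn : i' + 1 ≤ n := by omega
      push_cast
      have key : ((i':ℝ)+2) * (2*((n:ℝ)+1) * dd (n+1) (i'+2))
          ≤ (((n:ℝ)+1) - ((i':ℝ)+1)) * (2*((n:ℝ)+1) * dd (n+1) (i'+1)) := by
        rw [e1, e2]
        nlinarith [dd_nonneg n i', dd_nonneg n (i'+1), dd_nonneg n (i'+2),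
          mul_le_mul_of_nonneg_left hIH1 (by positivity : (0:ℝ) ≤ 2*(n:ℝ)+2*(i':ℝ)+2),
          mul_le_mul_of_nonneg_left hIH2 (by positivity : (0:ℝ) ≤ 4*(n:ℝ)+2*(i':ℝ)+7)]
      calc 2*((n:ℝ)+1) * (((i':ℝ)+1+1) * dd (n+1) (i'+1+1))
          = ((i':ℝ)+2) * (2*((n:ℝ)+1) * dd (n+1) (i'+2)) := by ring_nf
        _ ≤ (((n:ℝ)+1) - ((i':ℝ)+1)) * (2*((n:ℝ)+1) * dd (n+1) (i'+1)) := key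
        _ = 2*((n:ℝ)+1) * ((((n:ℝ)+1) - ((i':ℝ)+1)) * dd (n+1) (i'+1)) := by ring

lemma lemU : ∀ m i : ℕ, i + 1 ≤ m → 2*((m:ℝ) - i) * dd m i ≤ (2*(i:ℝ)+3) * dd m (i+1) := by
  intro m
  induction m with
  | zero => intro i hi; omega
  | succ n ih =>
    intro i hi
    have hpos : (0:ℝ) < 2*((n:ℝ)+1) := by positivity
    refine le_of_mul_le_mul_left ?_ hpos
    rcases i with _ | i'
    · -- i = 0
      have hb : 2*((n:ℝ) - 0) * dd n 0 ≤ 3 * dd n 1 := by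
        rcases Nat.eq_zero_or_pos n with h | h
        · subst h; rw [dd_eq_zero 0 1 (by omega)]; simp
        · have := ih 0 (by omega)
          push_cast at this ⊢
          linarith [this]
      have e1 : 2*((n:ℝ)+1) * dd (n+1) 1
          = (2*(n:ℝ)+2) * dd n 0 + (4*(n:ℝ)+5) * dd n 1 := by
        have := ddrecS n 0
        push_cast at this
        linarith [this]
      have e2 : 2*((n:ℝ)+1) * dd (n+1) 0 = (4*(n:ℝ)+3) * dd n 0 := ddrec0 n
      push_cast
      have key : 2*(((n:ℝ)+1) - 0) * (2*((n:ℝ)+1) * dd (n+1) 0)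
          ≤ (2*(0:ℝ)+3) * (2*((n:ℝ)+1) * dd (n+1) 1) := by
        rw [e1, e2]
        nlinarith [dd_nonneg n 0, dd_nonneg n 1,
          mul_le_mul_of_nonneg_left hb (by positivity : (0:ℝ) ≤ 4*(n:ℝ)+5)]
      calc 2*((n:ℝ)+1) * (2*(((n:ℝ)+1) - 0) * dd (n+1) 0)
          = 2*(((n:ℝ)+1) - 0) * (2*((n:ℝ)+1) * dd (n+1) 0) := by ring
        _ ≤ (2*(0:ℝ)+3) * (2*((n:ℝ)+1) * dd (n+1) 1) := key
        _ = 2*((n:ℝ)+1) * ((2*(0:ℝ)+3) * dd (n+1) (0+1)) := by norm_num; ring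
    · -- i = i'+1
      have hIH1 : 2*((n:ℝ) - i') * dd n i' ≤ (2*(i':ℝ)+3) * dd n (i'+1) := ih i' (by omega)
      have hIH2 : 2*((n:ℝ) - i' - 1) * dd n (i'+1) ≤ (2*(i':ℝ)+5) * dd n (i'+2) := by
        rcases lt_or_ge (i'+2) (n+1) with h | h
        · have := ih (i'+1) (by omega)
          push_cast at this
          linarith [this]
        · have : (n:ℝ) - i' - 1 = 0 := by
            have : i' + 1 = n := by omega
            rw [← this]; push_cast; ring
          rw [this]
          have h5 : (0:ℝ) ≤ (2*(i':ℝ)+5) * dd n (i'+2) := by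
            have := dd_nonneg n (i'+2); positivity
          linarith [h5]
      have e1 : 2*((n:ℝ)+1) * dd (n+1) (i'+2)
          = (2*(n:ℝ)+2*(i':ℝ)+4) * dd n (i'+1) + (4*(n:ℝ)+2*(i':ℝ)+7) * dd n (i'+2) := by
        have := ddrecS n (i'+1)
        push_cast at this
        linarith [this]
      have e2 : 2*((n:ℝ)+1) * dd (n+1) (i'+1)
          = (2*(n:ℝ)+2*(i':ℝ)+2) * dd n i' + (4*(n:ℝ)+2*(i':ℝ)+5) * dd n (i'+1) := ddrecS n i'
      push_cast
      have key : 2*(((n:ℝ)+1) - ((i':ℝ)+1)) * (2*((n:ℝ)+1) * dd (n+1) (i'+1))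
          ≤ (2*((i':ℝ)+1)+3) * (2*((n:ℝ)+1) * dd (n+1) (i'+2)) := by
        rw [e1, e2]
        nlinarith [dd_nonneg n i', dd_nonneg n (i'+1), dd_nonneg n (i'+2),
          mul_le_mul_of_nonneg_left hIH1 (by positivity : (0:ℝ) ≤ 2*(n:ℝ)+2*(i':ℝ)+2),
          mul_le_mul_of_nonneg_left hIH2 (by positivity : (0:ℝ) ≤ 4*(n:ℝ)+2*(i':ℝ)+7)]
      calc 2*((n:ℝ)+1) * (2*(((n:ℝ)+1) - ((i':ℝ)+1)) * dd (n+1) (i'+1))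
          = 2*(((n:ℝ)+1) - ((i':ℝ)+1)) * (2*((n:ℝ)+1) * dd (n+1) (i'+1)) := by ring
        _ ≤ (2*((i':ℝ)+1)+3) * (2*((n:ℝ)+1) * dd (n+1) (i'+2)) := key
        _ = 2*((n:ℝ)+1) * ((2*((i':ℝ)+1)+3) * dd (n+1) (i'+1+1)) := by ring

lemma cross (p q x y u v : ℝ) (hp : 0 < p) (hq : 0 < q) (hx : 0 ≤ x) (hy : 0 ≤ y)
    (hu : 0 ≤ u) (hv : 0 ≤ v)
    (h1 : q * x ≤ p * u) (h2 : p * y ≤ q * v) : x * y ≤ u * v := by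
  have h3 : (q*x)*(p*y) ≤ (p*u)*(q*v) :=
    mul_le_mul h1 h2 (by positivity) (le_trans (by positivity) h1)
  nlinarith [h3, mul_pos hp hq]

lemma cross2 (p q r s x y u v : ℝ) (hp : 0 < p) (hr : 0 < r) (hx : 0 ≤ x) (hy : 0 ≤ y)
    (hu : 0 ≤ u) (hv : 0 ≤ v) (hqs : q*s ≤ p*r)
    (h1 : p*x ≤ q*u) (h2 : r*y ≤ s*v) : x*y ≤ u*v := by
  have h3 : (p*x)*(r*y) ≤ (q*u)*(s*v) :=
    mul_le_mul h1 h2 (by positivity) (le_trans (by positivity) h1)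
  have h4 : (q*u)*(s*v) ≤ (p*r)*(u*v) := by nlinarith [mul_nonneg hu hv]
  nlinarith [h3, h4, mul_pos hp hr]

open Finset in
theorem stmt_13 (m : ℕ) (hm : 2 ≤ m) (d : ℕ → ℝ)
    (hd : ∀ k ≤ m, d k = ∑ j ∈ Icc k m, (j.choose k : ℝ) * bmCoeff m j) :
    RatioMonotone d m := by
  have hde : ∀ k, k ≤ m → d k = dd m k := fun k hk => hd k hk
  have dpos : ∀ k, k ≤ m → 0 < d k := fun k hk => (hde k hk) ▸ dd_pos m k hk
  refine ⟨?_, ?_, ?_, ?_⟩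
  · -- clause 1
    intro i hi
    have him : i + 1 ≤ m := by omega
    obtain ⟨j, rfl⟩ : ∃ j, m = i + j + 1 := ⟨m - i - 1, by omega⟩
    set M := i + j + 1 with hM
    have e1 : M - i = j + 1 := by omega
    have e2 : M - (i+1) = j := by omega
    rw [e1, e2, div_le_div_iff₀ (dpos i (by omega)) (dpos (i+1) (by omega)),
        hde (j+1) (by omega), hde i (by omega), hde j (by omega), hde (i+1) (by omega)]
    have L1 := lemL M i (by omega)
    have L2 := lemL M j (by omega)
    have c1 : ((M:ℕ):ℝ) - (i:ℝ) = (j:ℝ) + 1 := by rw [hM]; push_cast; ring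
    have c2 : ((M:ℕ):ℝ) - (j:ℝ) = (i:ℝ) + 1 := by rw [hM]; push_cast; ring
    rw [c1] at L1
    rw [c2] at L2
    exact cross ((i:ℝ)+1) ((j:ℝ)+1) (dd M (j+1)) (dd M (i+1)) (dd M j) (dd M i)
      (by positivity) (by positivity) (dd_nonneg _ _) (dd_nonneg _ _)
      (dd_nonneg _ _) (dd_nonneg _ _) L2 L1
  · -- clause 2
    rcases Nat.even_or_odd m with ⟨t, ht⟩ | ⟨t, ht⟩
    · -- m even, m = 2t+2 with t ≥ 0
      obtain ⟨s, rfl⟩ : ∃ s, m = 2*s + 2 := ⟨t - 1, by omega⟩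
      have hq : (2*s + 2 - 1) / 2 = s := by omega
      have hq2 : 2*s + 2 - s = s + 2 := by omega
      rw [hq, hq2, div_le_one (dpos s (by omega)), hde (s+2) (by omega), hde s (by omega)]
      have L1 := lemL (2*s+2) (s+1) (by omega)
      have L2 := lemL (2*s+2) s (by omega)
      have c1 : ((2*s+2:ℕ):ℝ) - ((s:ℝ)+1) = (s:ℝ) + 1 := by push_cast; ring
      have c2 : ((2*s+2:ℕ):ℝ) - (s:ℝ) = (s:ℝ) + 2 := by push_cast; ring
      push_cast at L1 L2
      nlinarith [L1, L2, dd_nonneg (2*s+2) (s+1)]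
    · -- m odd, m = 2t+1, t ≥ 1
      obtain ⟨s, rfl⟩ : ∃ s, m = 2*s + 1 := ⟨t, by omega⟩
      have hq : (2*s + 1 - 1) / 2 = s := by omega
      have hq2 : 2*s + 1 - s = s + 1 := by omega
      rw [hq, hq2, div_le_one (dpos s (by omega)), hde (s+1) (by omega), hde s (by omega)]
      have L1 := lemL (2*s+1) s (by omega)
      push_cast at L1
      nlinarith [L1]
  · -- clause 3
    intro i h1i hi
    have him : 2*(i+1) ≤ m := by omega
    obtain ⟨a, rfl⟩ : ∃ a, i = a + 1 := ⟨i - 1, by omega⟩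
    obtain ⟨j, rfl⟩ : ∃ j, m = a + j + 2 := ⟨m - a - 2, by omega⟩
    set M := a + j + 2 with hM
    have e1 : a + 1 - 1 = a := by omega
    have e2 : M - (a+1) = j + 1 := by omega
    have e3 : M - (a+1+1) = j := by omega
    rw [e1, e2, e3, div_le_div_iff₀ (dpos (j+1) (by omega)) (dpos j (by omega)),
        hde a (by omega), hde j (by omega), hde (a+1) (by omega), hde (j+1) (by omega)]
    have U1 := lemU M a (by omega)
    have U2 := lemU M j (by omega)
    have c1 : ((M:ℕ):ℝ) - (a:ℝ) = (j:ℝ) + 2 := by rw [hM]; push_cast; ring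
    have c2 : ((M:ℕ):ℝ) - (j:ℝ) = (a:ℝ) + 2 := by rw [hM]; push_cast; ring
    rw [c1] at U1
    rw [c2] at U2
    -- U1 : 2(j+2) dd a ≤ (2a+3) dd (a+1) ;  U2 : 2(a+2) dd j ≤ (2j+3) dd (j+1)
    exact cross2 (2*((j:ℝ)+2)) (2*(a:ℝ)+3) (2*((a:ℝ)+2)) (2*(j:ℝ)+3)
      (dd M a) (dd M j) (dd M (a+1)) (dd M (j+1))
      (by positivity) (by positivity) (dd_nonneg _ _) (dd_nonneg _ _)
      (dd_nonneg _ _) (dd_nonneg _ _) (by nlinarith []) U1 U2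
  · -- clause 4
    intro hm2
    rcases Nat.even_or_odd m with ⟨t, ht⟩ | ⟨t, ht⟩
    · obtain ⟨s, rfl⟩ : ∃ s, m = 2*s + 2 := ⟨t - 1, by omega⟩
      have hq : (2*s + 2) / 2 = s + 1 := by omega
      have hq1 : s + 1 - 1 = s := by omega
      have hq2 : 2*s + 2 - (s+1) = s + 1 := by omega
      rw [hq, hq1, hq2, div_le_one (dpos (s+1) (by omega)), hde s (by omega),
          hde (s+1) (by omega)]
      have U1 := lemU (2*s+2) s (by omega)
      push_cast at U1
      nlinarith [U1, dd_nonneg (2*s+2) s]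
    · obtain ⟨s, rfl⟩ : ∃ s, m = 2*s + 3 := ⟨t - 1, by omega⟩
      have hq : (2*s + 3) / 2 = s + 1 := by omega
      have hq1 : s + 1 - 1 = s := by omega
      have hq2 : 2*s + 3 - (s+1) = s + 2 := by omega
      rw [hq, hq1, hq2, div_le_one (dpos (s+2) (by omega)), hde s (by omega),
          hde (s+2) (by omega)]
      have U1 := lemU (2*s+3) s (by omega)
      have U2 := lemU (2*s+3) (s+1) (by omega)
      push_cast at U1 U2
      nlinarith [U1, U2, dd_nonneg (2*s+3) s, dd_nonneg (2*s+3) (s+1), dd_nonneg (2*s+3) (s+2)]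
end

section
/- If P(x) = ∑_{k=0}^m a_k x^k with 0 < a_0 ≤ ... ≤ a_m and b_k denotes the k-th coefficient of P(x+1), then b_{m-i}/b_i ≤ 1 for all 0 ≤ i ≤ ⌊(m-1)/2⌋ (i.e., b_{m-i} ≤ b_i whenever i < m-i). -/
open Finset in
lemma choose_mono_half {n s t : ℕ} (h1 : s ≤ t) (h2 : t ≤ n / 2) :
    n.choose s ≤ n.choose t := by
  induction t with
  | zero => simp [Nat.le_zero.1 h1]
  | succ k ih =>
    rcases Nat.lt_or_ge s (k + 1) with h | h
    · exact le_trans (ih (by omega) (by omega))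
        (Nat.choose_le_succ_of_lt_half_left (by omega))
    · have : s = k + 1 := by omega
      simp [this]

lemma choose_unimodal {n s t : ℕ} (h1 : s ≤ t) (h2 : t ≤ n - s) :
    n.choose s ≤ n.choose t := by
  have htn : t ≤ n := le_trans h2 (Nat.sub_le _ _)
  rcases le_or_gt t (n / 2) with h | h
  · exact choose_mono_half h1 h
  · rw [← Nat.choose_symm htn]
    exact choose_mono_half (by omega) (by omega)

open Finset in
theorem stmt_18 (m : ℕ) (a b : ℕ → ℝ)
    (hpos : 0 < a 0)
    (hmono : ∀ k, k + 1 ≤ m → a k ≤ a (k + 1))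
    (hb : ∀ k ≤ m, b k = ∑ j ∈ Icc k m, (j.choose k : ℝ) * a j) :
    ∀ i : ℕ, i ≤ (m - 1) / 2 → b (m - i) ≤ b i := by
  intro i hi
  have h2i : 2 * i ≤ m := by omega
  have him : i ≤ m := by omega
  have hapos : ∀ j, j ≤ m → 0 < a j := by
    intro j
    induction j with
    | zero => intro _; exact hpos
    | succ n ih => intro hj; exact lt_of_lt_of_le (ih (by omega)) (hmono n hj)
  rw [hb i him, hb (m - i) (Nat.sub_le _ _)]
  calc ∑ j ∈ Icc (m - i) m, (j.choose (m - i) : ℝ) * a j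
      ≤ ∑ j ∈ Icc (m - i) m, (j.choose i : ℝ) * a j := by
        apply Finset.sum_le_sum
        intro j hj
        simp only [mem_Icc] at hj
        have hc : j.choose (m - i) ≤ j.choose i := by
          rw [← Nat.choose_symm hj.1]
          exact choose_unimodal (by omega) (by omega)
        exact mul_le_mul_of_nonneg_right (by exact_mod_cast hc) (le_of_lt (hapos j hj.2))
    _ ≤ ∑ j ∈ Icc i m, (j.choose i : ℝ) * a j := by
        apply Finset.sum_le_sum_of_subset_of_nonneg
        · exact Icc_subset_Icc_left (by omega)
        · intro j hj _
          have := hapos j (mem_Icc.1 hj).2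
          positivity
end

section
/- If P(x) = ∑_{k=0}^m a_k x^k with 0 < a_0 ≤ ... ≤ a_m and b_k denotes the k-th coefficient of P(x+1), then b_{i-1} ≤ b_{m-i} for all 1 ≤ i ≤ ⌊m/2⌋. -/
open Finset

/-- Binomial coefficients are monotone up to the middle. -/
private lemma choose_mono_to_half (t : ℕ) : ∀ s r, r ≤ s → 2 * s ≤ t →
    t.choose r ≤ t.choose s := by
  intro s
  induction s with
  | zero => intro r hr _; have : r = 0 := Nat.le_zero.mp hr; simp [this]
  | succ s ih =>
    intro r hr ht
    rcases Nat.lt_or_ge r (s + 1) with h | h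
    · have h1 : r ≤ s := Nat.lt_succ_iff.mp h
      refine (ih r h1 (by omega)).trans ?_
      have key : t.choose (s + 1) * (s + 1) = t.choose s * (t - s) :=
        Nat.choose_succ_right_eq t s
      have h2 : t.choose s * (s + 1) ≤ t.choose s * (t - s) :=
        Nat.mul_le_mul_left _ (by omega)
      rw [← key] at h2
      exact Nat.le_of_mul_le_mul_right h2 (by omega)
    · have : r = s + 1 := le_antisymm hr h
      simp [this]

private lemma choose_le_choose_of_add_le (t r s : ℕ) (h1 : r ≤ s) (h2 : r + s ≤ t) :
    t.choose r ≤ t.choose s := by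
  rcases le_or_gt (2 * s) t with h | h
  · exact choose_mono_to_half t s r h1 h
  · have hs : s ≤ t := by omega
    rw [← Nat.choose_symm hs]
    exact choose_mono_to_half t (t - s) r (by omega) (by omega)

private lemma sum_range_choose_eq (r : ℕ) : ∀ n, ∑ j ∈ range n, j.choose r = n.choose (r + 1) := by
  intro n
  induction n with
  | zero => simp
  | succ n ih =>
    rw [Finset.sum_range_succ, ih, Nat.choose_succ_succ' n r]
    omega

/-- Tail sum of the hockey stick identity. -/
private lemma sum_Icc_choose_tail (m r t : ℕ) (ht : t ≤ m + 1) :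
    (∑ j ∈ Icc t m, j.choose r) + t.choose (r + 1) = (m + 1).choose (r + 1) := by
  have h1 : (∑ j ∈ Finset.Ico 0 t, (Nat.choose · r) j) + ∑ j ∈ Finset.Ico t (m + 1), (Nat.choose · r) j
      = ∑ j ∈ Finset.Ico 0 (m + 1), (Nat.choose · r) j :=
    Finset.sum_Ico_consecutive _ (Nat.zero_le t) ht
  have h2 : Finset.Ico t (m + 1) = Icc t m := Finset.Ico_add_one_right_eq_Icc t m
  have h3 : Finset.Ico 0 t = range t := by rw [Finset.range_eq_Ico]
  have h4 : Finset.Ico 0 (m + 1) = range (m + 1) := by rw [Finset.range_eq_Ico]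
  rw [h2, h3, h4, sum_range_choose_eq, sum_range_choose_eq] at h1
  have h5 : (∑ j ∈ Icc t m, (fun x => x.choose r) j) = ∑ j ∈ Icc t m, j.choose r := rfl
  rw [h5] at h1
  omega

open Finset in
theorem stmt_19 (m : ℕ) (a b : ℕ → ℝ)
    (hpos : 0 < a 0)
    (hmono : ∀ k, k + 1 ≤ m → a k ≤ a (k + 1))
    (hb : ∀ k ≤ m, b k = ∑ j ∈ Icc k m, (j.choose k : ℝ) * a j) :
    ∀ i : ℕ, 1 ≤ i → i ≤ m / 2 → b (i - 1) ≤ b (m - i) := by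
  intro i hi1 hi2
  have h2i : 2 * i ≤ m := by
    have := Nat.div_mul_le_self m 2
    omega
  set k := i - 1 with hk
  set l := m - i with hl
  have hkl : k + l + 1 = m := by omega
  have hkle : k ≤ l := by omega
  have hkm : k ≤ m := by omega
  have hlm : l ≤ m := by omega
  rw [hb k hkm, hb l hlm]
  -- increments
  set d : ℕ → ℝ := fun t => if t = 0 then a 0 else a t - a (t - 1) with hd
  have hdnn : ∀ t ≤ m, 0 ≤ d t := by
    intro t htm
    rcases Nat.eq_zero_or_pos t with h | h
    · simp [hd, h]; exact hpos.le
    · have key := hmono (t - 1) (by omega)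
      rw [show t - 1 + 1 = t from by omega] at key
      simp only [hd]
      rw [if_neg (by omega)]
      linarith
  have ha : ∀ j ≤ m, a j = ∑ t ∈ range (j + 1), d t := by
    intro j
    induction j with
    | zero => intro _; simp [hd]
    | succ j ih =>
      intro hj
      rw [Finset.sum_range_succ, ← ih (by omega)]
      simp only [hd]
      rw [if_neg (by omega)]
      simp
  -- extend sums to range (m+1)
  have ext : ∀ r ≤ m, ∑ j ∈ Icc r m, (j.choose r : ℝ) * a j
      = ∑ j ∈ range (m + 1), (j.choose r : ℝ) * a j := by
    intro r hr
    apply Finset.sum_subset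
    · intro x hx
      simp only [mem_Icc] at hx
      simp only [mem_range]
      omega
    · intro x hx hnx
      simp only [mem_range] at hx
      simp only [mem_Icc] at hnx
      have : x < r := by omega
      rw [Nat.choose_eq_zero_of_lt this]
      simp
  rw [ext k hkm, ext l hlm]
  -- key rewriting via Abel summation
  have key : ∀ r : ℕ, ∑ j ∈ range (m + 1), (j.choose r : ℝ) * a j
      = ∑ t ∈ range (m + 1), d t * ∑ j ∈ Icc t m, (j.choose r : ℝ) := by
    intro r
    calc ∑ j ∈ range (m + 1), (j.choose r : ℝ) * a j
        = ∑ j ∈ range (m + 1), ∑ t ∈ range (m + 1),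
            (if t ≤ j then (j.choose r : ℝ) * d t else 0) := by
          apply Finset.sum_congr rfl
          intro j hj
          simp only [mem_range] at hj
          rw [ha j (by omega), Finset.mul_sum, ← Finset.sum_filter]
          have : Finset.filter (fun t => t ≤ j) (range (m + 1)) = range (j + 1) := by
            ext x; simp only [mem_filter, mem_range]; omega
          rw [this]
      _ = ∑ t ∈ range (m + 1), ∑ j ∈ range (m + 1),
            (if t ≤ j then (j.choose r : ℝ) * d t else 0) := Finset.sum_comm
      _ = ∑ t ∈ range (m + 1), d t * ∑ j ∈ Icc t m, (j.choose r : ℝ) := by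
          apply Finset.sum_congr rfl
          intro t ht
          rw [← Finset.sum_filter]
          have : Finset.filter (fun j => t ≤ j) (range (m + 1)) = Icc t m := by
            ext x; simp only [mem_filter, mem_range, mem_Icc]; omega
          rw [this, Finset.mul_sum]
          apply Finset.sum_congr rfl
          intro j _
          ring
  rw [key k, key l]
  apply Finset.sum_le_sum
  intro t ht
  simp only [mem_range] at ht
  apply mul_le_mul_of_nonneg_left _ (hdnn t (by omega))
  -- tail sums comparison, in ℕ
  have hsym : (m + 1).choose (k + 1) = (m + 1).choose (l + 1) := by
    have : m + 1 - (l + 1) = k + 1 := by omega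
    rw [← Nat.choose_symm (by omega : l + 1 ≤ m + 1), this]
  have hchoose : t.choose (l + 1) ≤ t.choose (k + 1) := by
    rcases Nat.lt_or_ge t (l + 1) with h | h
    · rw [Nat.choose_eq_zero_of_lt h]; exact Nat.zero_le _
    · rw [← Nat.choose_symm h]
      exact choose_le_choose_of_add_le t (t - (l + 1)) (k + 1) (by omega) (by omega)
  have h1 := sum_Icc_choose_tail m k t (by omega)
  have h2 := sum_Icc_choose_tail m l t (by omega)
  have hnat : (∑ j ∈ Icc t m, j.choose k) ≤ ∑ j ∈ Icc t m, j.choose l := by omega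
  calc (∑ j ∈ Icc t m, (j.choose k : ℝ)) = ((∑ j ∈ Icc t m, j.choose k : ℕ) : ℝ) := by
        push_cast; ring
    _ ≤ ((∑ j ∈ Icc t m, j.choose l : ℕ) : ℝ) := by exact_mod_cast hnat
    _ = ∑ j ∈ Icc t m, (j.choose l : ℝ) := by push_cast; ring
end
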